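/- arXiv:1710.03911 — 4 statements merged into one kernel-verified Lean document; each statement's English description precedes it below -/
import Mathlib

section
/- Let μ : ℂˣ × SL(2, ℂ) → GL(2, ℂ) be the group homomorphism μ(λ, h) = λ·h, let G be a finite subgroup of GL(2, ℂ), and let G̃ = μ⁻¹(G). Then the number of conjugacy classes of G̃ is exactly twice the number of conjugacy classes of G. -/
open Matrix

/-- Scalar matrices, as a homomorphism `ℂˣ →* GL(2, ℂ)`. -/
def scalarGL : ℂˣ →* GL (Fin 2) ℂ :=
  Units.map (Matrix.scalar (Fin 2)).toMonoidHom

lemma scalarGL_central (a : ℂˣ) (g : GL (Fin 2) ℂ) :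
    scalarGL a * g = g * scalarGL a := by
  apply Units.ext
  show (Matrix.scalar (Fin 2) (a : ℂ)) * (g : Matrix (Fin 2) (Fin 2) ℂ)
     = (g : Matrix (Fin 2) (Fin 2) ℂ) * (Matrix.scalar (Fin 2) (a : ℂ))
  exact (Matrix.scalar_commute (a : ℂ) (fun r => mul_comm _ _) _)

/-- The homomorphism `μ : ℂˣ × SL(2, ℂ) → GL(2, ℂ)`, `μ(λ, h) = λ·h`. -/
def mu : ℂˣ × Matrix.SpecialLinearGroup (Fin 2) ℂ →* GL (Fin 2) ℂ where
  toFun p := scalarGL p.1 * Matrix.SpecialLinearGroup.toGL p.2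
  map_one' := by simp
  map_mul' p q := by
    simp only [Prod.fst_mul, Prod.snd_mul, _root_.map_mul]
    rw [mul_assoc (scalarGL p.1), ← mul_assoc (scalarGL q.1),
      scalarGL_central q.1 (Matrix.SpecialLinearGroup.toGL p.2)]
    simp [mul_assoc]


lemma mu_coe (p : ℂˣ × Matrix.SpecialLinearGroup (Fin 2) ℂ) :
    ((mu p : GL (Fin 2) ℂ) : Matrix (Fin 2) (Fin 2) ℂ)
      = (p.1 : ℂ) • (p.2 : Matrix (Fin 2) (Fin 2) ℂ) := by
  show (Matrix.scalar (Fin 2) (p.1 : ℂ)) * (p.2 : Matrix (Fin 2) (Fin 2) ℂ) = _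
  rw [Matrix.scalar_apply, ← Matrix.smul_eq_diagonal_mul]

/-- `-1` as an element of `SL(2,ℂ)`. -/
noncomputable def negOneSL : Matrix.SpecialLinearGroup (Fin 2) ℂ :=
  ⟨-1, by simp [Matrix.det_neg]⟩

/-- The nontrivial kernel element of `μ`. -/
noncomputable def zker : ℂˣ × Matrix.SpecialLinearGroup (Fin 2) ℂ := ((-1 : ℂˣ), negOneSL)

lemma mu_zker : mu zker = 1 := by
  apply Units.ext
  rw [mu_coe]
  show ((-1 : ℂˣ) : ℂ) • ((-1 : Matrix (Fin 2) (Fin 2) ℂ)) = 1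
  simp

lemma zker_mul_self : zker * zker = 1 := by
  apply Prod.ext
  · simp [zker]
  · apply Subtype.ext
    show ((-1 : Matrix (Fin 2) (Fin 2) ℂ)) * (-1) = 1
    simp

lemma zker_central (a : ℂˣ × Matrix.SpecialLinearGroup (Fin 2) ℂ) :
    a * zker = zker * a := by
  apply Prod.ext
  · simp [zker, mul_comm]
  · apply Subtype.ext
    show (a.2 : Matrix (Fin 2) (Fin 2) ℂ) * (-1) = (-1) * (a.2 : Matrix (Fin 2) (Fin 2) ℂ)
    simp

lemma mu_ker {p : ℂˣ × Matrix.SpecialLinearGroup (Fin 2) ℂ} (h : mu p = 1) :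
    p = 1 ∨ p = zker := by
  have hm : (p.1 : ℂ) • (p.2 : Matrix (Fin 2) (Fin 2) ℂ) = 1 := by
    rw [← mu_coe, h]; rfl
  have hdet : ((p.1 : ℂ)) * (p.1 : ℂ) = 1 := by
    have h2 := congrArg Matrix.det hm
    rw [Matrix.det_smul, p.2.prop, Fintype.card_fin, mul_one, Matrix.det_one, sq] at h2
    exact h2
  rcases mul_self_eq_one_iff.mp hdet with h1 | h1
  · left
    have hu : p.1 = 1 := Units.ext h1
    have hM : (p.2 : Matrix (Fin 2) (Fin 2) ℂ) = 1 := by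
      rw [h1, one_smul] at hm; exact hm
    exact Prod.ext hu (Subtype.ext hM)
  · right
    have hu : p.1 = -1 := Units.ext (by rw [h1]; simp)
    have hM : (p.2 : Matrix (Fin 2) (Fin 2) ℂ) = -1 := by
      rw [h1, neg_smul, one_smul, neg_eq_iff_eq_neg] at hm
      rw [hm]
    exact Prod.ext hu (Subtype.ext hM)

lemma mu_surjective : Function.Surjective mu := by
  intro g
  have hdet : IsUnit (g : Matrix (Fin 2) (Fin 2) ℂ).det :=
    (Matrix.isUnit_iff_isUnit_det _).mp g.isUnit
  have hdet0 : (g : Matrix (Fin 2) (Fin 2) ℂ).det ≠ 0 := hdet.ne_zero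
  obtain ⟨l, hl⟩ := IsAlgClosed.exists_pow_nat_eq (g : Matrix (Fin 2) (Fin 2) ℂ).det
    (n := 2) (by norm_num)
  have hl0 : l ≠ 0 := by
    intro h; rw [h] at hl; simp at hl; exact hdet0 hl.symm
  refine ⟨(Units.mk0 l hl0, ⟨l⁻¹ • (g : Matrix (Fin 2) (Fin 2) ℂ), ?_⟩), ?_⟩
  · rw [Matrix.det_smul, Fintype.card_fin, ← hl]
    field_simp
  · apply Units.ext
    rw [mu_coe]
    show l • (l⁻¹ • (g : Matrix (Fin 2) (Fin 2) ℂ)) = _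
    rw [smul_smul, mul_inv_cancel₀ hl0, one_smul]

/-- For a finite subgroup `G ⊂ GL(2, ℂ)` and `G̃ = μ⁻¹(G)`,
the number of conjugacy classes of `G̃` is twice the number of conjugacy
classes of `G`. -/
theorem conjClasses_card_preimage_eq_two_mul
    (G : Subgroup (GL (Fin 2) ℂ)) (hGfin : (G : Set (GL (Fin 2) ℂ)).Finite) :
    Nat.card (ConjClasses ↥(Subgroup.comap mu G))
      = 2 * Nat.card (ConjClasses ↥G) := by
  classical
  set H := Subgroup.comap mu G with hHdef
  haveI : Finite ↥G := hGfin.to_subtype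
  have hHfin : (H : Set (ℂˣ × Matrix.SpecialLinearGroup (Fin 2) ℂ)).Finite := by
    rw [hHdef, Subgroup.coe_comap]
    have hsub : mu ⁻¹' (G : Set (GL (Fin 2) ℂ))
        ⊆ ⋃ g ∈ (G : Set (GL (Fin 2) ℂ)), mu ⁻¹' {g} := by
      intro x hx; exact Set.mem_biUnion hx rfl
    refine Set.Finite.subset (Set.Finite.biUnion hGfin fun g _ => ?_) hsub
    by_cases hne : (mu ⁻¹' {g}).Nonempty
    · obtain ⟨a, ha⟩ := hne
      have ha' : mu a = g := ha
      refine Set.Finite.subset ((Set.finite_singleton (zker * a)).insert a) ?_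
      intro b hb
      have hb' : mu b = g := hb
      have h1 : mu (b * a⁻¹) = 1 := by
        rw [_root_.map_mul, _root_.map_inv, hb', ha', mul_inv_cancel]
      rcases mu_ker h1 with h2 | h2
      · left; exact mul_inv_eq_one.mp h2
      · right
        have : b = zker * a := mul_inv_eq_iff_eq_mul.mp h2
        simp [this]
    · rw [Set.not_nonempty_iff_eq_empty] at hne
      rw [hne]; exact Set.finite_empty
  haveI : Finite ↥H := hHfin.to_subtype
  let φ : ↥H →* ↥G := mu.subgroupComap G
  have hφsurj : Function.Surjective φ := by
    rintro ⟨g, hg⟩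
    obtain ⟨p, hp⟩ := mu_surjective g
    exact ⟨⟨p, by rw [hHdef, Subgroup.mem_comap, hp]; exact hg⟩, Subtype.ext hp⟩
  have hzmem : zker ∈ H := by rw [hHdef, Subgroup.mem_comap, mu_zker]; exact G.one_mem
  let z : ↥H := ⟨zker, hzmem⟩
  have hz1 : φ z = 1 := Subtype.ext mu_zker
  have hzz : z * z = 1 := Subtype.ext zker_mul_self
  have hzc : ∀ a : ↥H, a * z = z * a := fun a => Subtype.ext (zker_central a.1)
  -- first coordinate is a conjugation invariant
  have hcomm : ∀ u v : ℂˣ, u * v * u⁻¹ = v := fun u v => by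
    rw [mul_comm u v, mul_assoc, mul_inv_cancel, mul_one]
  have hne2 : ∀ x : ↥H, ¬ IsConj (z * x) x := by
    intro x hc
    obtain ⟨c, hc⟩ := isConj_iff.mp hc
    have h1 := congrArg (fun w : ↥H =>
      ((w : ℂˣ × Matrix.SpecialLinearGroup (Fin 2) ℂ)).1) hc
    simp only [Subgroup.coe_mul, Subgroup.coe_inv, Prod.fst_mul, Prod.fst_inv] at h1
    have h2 : (-1 : ℂˣ) * (x : ℂˣ × Matrix.SpecialLinearGroup (Fin 2) ℂ).1
        = (x : ℂˣ × Matrix.SpecialLinearGroup (Fin 2) ℂ).1 := by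
      have h3 := hcomm (c : ℂˣ × Matrix.SpecialLinearGroup (Fin 2) ℂ).1
        ((-1 : ℂˣ) * (x : ℂˣ × Matrix.SpecialLinearGroup (Fin 2) ℂ).1)
      rw [← h3]
      convert h1 using 2
      rfl
    have h4 : (-1 : ℂˣ) = 1 := mul_right_cancel (h2.trans (one_mul _).symm)
    have h5 := congrArg (Units.val) h4
    norm_num at h5
  have hrearr : ∀ c u : ↥H, c * (z * u) * c⁻¹ = z * (c * u * c⁻¹) := fun c u => by
    rw [← mul_assoc c z u, hzc c, mul_assoc z c u, mul_assoc z (c * u) c⁻¹]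
  have hconj_z : ∀ {u v : ↥H}, IsConj u v → IsConj (z * u) (z * v) := by
    intro u v h
    obtain ⟨c, hc⟩ := isConj_iff.mp h
    refine isConj_iff.mpr ⟨c, ?_⟩
    rw [hrearr c u, hc]
  have hkey : ∀ x y : ↥H, IsConj (φ x) (φ y) → IsConj x y ∨ IsConj (z * x) y := by
    intro x y h
    obtain ⟨c, hc⟩ := isConj_iff.mp h
    obtain ⟨d, rfl⟩ := hφsurj c
    have heq : φ (d * x * d⁻¹) = φ y := by
      rw [_root_.map_mul, _root_.map_mul, _root_.map_inv]; exact hc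
    have hmu : mu ((d * x * d⁻¹ : ↥H) : ℂˣ × Matrix.SpecialLinearGroup (Fin 2) ℂ)
        = mu ((y : ↥H) : ℂˣ × Matrix.SpecialLinearGroup (Fin 2) ℂ) := by
      exact congrArg Subtype.val heq
    have h2 : mu (((d * x * d⁻¹) * y⁻¹ : ↥H) : ℂˣ × Matrix.SpecialLinearGroup (Fin 2) ℂ) = 1 := by
      rw [Subgroup.coe_mul, Subgroup.coe_inv, _root_.map_mul, _root_.map_inv, hmu, mul_inv_cancel]
    rcases mu_ker h2 with h3 | h3
    · left
      have h4 : (d * x * d⁻¹) * y⁻¹ = 1 := Subtype.ext h3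
      exact isConj_iff.mpr ⟨d, mul_inv_eq_one.mp h4⟩
    · right
      have h4 : (d * x * d⁻¹) * y⁻¹ = z := Subtype.ext h3
      have h5 : d * x * d⁻¹ = z * y := mul_inv_eq_iff_eq_mul.mp h4
      refine isConj_iff.mpr ⟨d, ?_⟩
      rw [hrearr d x, h5, ← mul_assoc, hzz, one_mul]
  -- counting
  let π : ConjClasses ↥H → ConjClasses ↥G := ConjClasses.map φ
  haveI : Finite (ConjClasses ↥H) := Quotient.finite _
  haveI : Finite (ConjClasses ↥G) := Quotient.finite _
  have hπmk : ∀ b : ↥H, π (ConjClasses.mk b) = ConjClasses.mk (φ b) := fun b => rfl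
  have hfiber : ∀ c : ConjClasses ↥G, Nat.card {x : ConjClasses ↥H // π x = c} = 2 := by
    intro c
    obtain ⟨g, rfl⟩ := ConjClasses.exists_rep c
    obtain ⟨a, ha⟩ := hφsurj g
    rw [Nat.card_eq_two_iff]
    refine ⟨⟨ConjClasses.mk a, by rw [hπmk, ha]⟩,
      ⟨ConjClasses.mk (z * a), by rw [hπmk, _root_.map_mul, hz1, one_mul, ha]⟩, ?_, ?_⟩
    · intro hxy
      have h1 : ConjClasses.mk a = ConjClasses.mk (z * a) := Subtype.ext_iff.mp hxy
      exact hne2 a (ConjClasses.mk_eq_mk_iff_isConj.mp h1).symm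
    · apply Set.eq_univ_iff_forall.mpr
      rintro ⟨w, hw⟩
      obtain ⟨b, rfl⟩ := ConjClasses.exists_rep w
      have hconj : IsConj (φ b) (φ a) := by
        rw [hπmk] at hw
        rw [← ha] at hw
        exact ConjClasses.mk_eq_mk_iff_isConj.mp hw
      rcases hkey b a hconj with h | h
      · exact Or.inl (Subtype.ext (ConjClasses.mk_eq_mk_iff_isConj.mpr h))
      · refine Or.inr (Set.mem_singleton_iff.mpr
          (Subtype.ext (ConjClasses.mk_eq_mk_iff_isConj.mpr ?_)))
        have h6 := hconj_z h
        rwa [← mul_assoc, hzz, one_mul] at h6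
  haveI : Fintype (ConjClasses ↥G) := Fintype.ofFinite _
  haveI : Fintype (ConjClasses ↥H) := Fintype.ofFinite _
  letI : ∀ c : ConjClasses ↥G, Fintype {x : ConjClasses ↥H // π x = c} :=
    fun c => Fintype.ofFinite _
  rw [Nat.card_eq_fintype_card, Nat.card_eq_fintype_card,
    ← Fintype.card_congr (Equiv.sigmaFiberEquiv π), Fintype.card_sigma]
  have hterm : ∀ c : ConjClasses ↥G, Fintype.card {x : ConjClasses ↥H // π x = c} = 2 :=
    fun c => by rw [← Nat.card_eq_fintype_card, hfiber c]
  rw [Finset.sum_congr rfl (fun c _ => hterm c), Finset.sum_const, smul_eq_mul,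
    Finset.card_univ, mul_comm]
end

section
/- Let G be a finite subgroup of GL(2, ℂ) containing −I. Let Z = {λ ∈ ℂˣ : λI ∈ G} (so −1 ∈ Z and |Z| is even) and let H = {h ∈ SL(2, ℂ) : λ·h ∈ G for some λ ∈ ℂˣ}, a finite subgroup of SL(2, ℂ). Then the number of conjugacy classes of G equals the number of conjugacy classes of H multiplied by |Z|/2; equivalently, 2·c(G) = c(H)·|Z|, where c(−) denotes the number of conjugacy classes. -/
open Matrix

abbrev SL2 := Matrix.SpecialLinearGroup (Fin 2) ℂ
abbrev P2 := ℂˣ × SL2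

lemma mu_val (p : P2) : ((mu p : GL (Fin 2) ℂ) : Matrix (Fin 2) (Fin 2) ℂ)
    = (p.1 : ℂ) • (p.2 : Matrix (Fin 2) (Fin 2) ℂ) := by
  show (Matrix.scalar (Fin 2) (p.1 : ℂ)) * (p.2 : Matrix (Fin 2) (Fin 2) ℂ) = _
  rw [Matrix.scalar_apply, ← Matrix.smul_eq_diagonal_mul]

noncomputable def eps : P2 := ((-1 : ℂˣ), (-1 : SL2))

lemma mu_eps : mu eps = 1 := by
  apply Units.ext
  rw [mu_val]
  show ((-1 : ℂˣ) : ℂ) • ((-1 : SL2) : Matrix (Fin 2) (Fin 2) ℂ) = 1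
  simp

lemma mu_eq_mu (p q : P2) (h : mu p = mu q) : p = q ∨ p = eps * q := by
  have hm : (p.1 : ℂ) • (p.2 : Matrix (Fin 2) (Fin 2) ℂ)
      = (q.1 : ℂ) • (q.2 : Matrix (Fin 2) (Fin 2) ℂ) := by
    rw [← mu_val, ← mu_val, h]
  have hdet : ((p.1 : ℂ))^2 = ((q.1 : ℂ))^2 := by
    have := congrArg Matrix.det hm
    simpa [Matrix.det_smul] using this
  rcases sq_eq_sq_iff_eq_or_eq_neg.mp hdet with h1 | h1
  · left
    have hu : p.1 = q.1 := Units.ext h1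
    have h2 : (p.2 : Matrix (Fin 2) (Fin 2) ℂ) = (q.2 : Matrix (Fin 2) (Fin 2) ℂ) := by
      apply smul_right_injective (Matrix (Fin 2) (Fin 2) ℂ) (Units.ne_zero q.1)
      rw [← h1] at hm ⊢; exact hm
    exact Prod.ext hu (Subtype.ext h2)
  · right
    have hu : p.1 = -q.1 := Units.ext (by rw [h1, Units.val_neg])
    have h2 : (p.2 : Matrix (Fin 2) (Fin 2) ℂ) = -(q.2 : Matrix (Fin 2) (Fin 2) ℂ) := by
      have key : (p.1 : ℂ) • (p.2 : Matrix (Fin 2) (Fin 2) ℂ)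
          = (p.1 : ℂ) • (-(q.2 : Matrix (Fin 2) (Fin 2) ℂ)) := by
        rw [hm, h1]; simp
      exact smul_right_injective (Matrix (Fin 2) (Fin 2) ℂ) (Units.ne_zero p.1) key
    refine Prod.ext ?_ (Subtype.ext ?_)
    · show p.1 = eps.1 * q.1
      rw [hu]; simp [eps]
    · show (p.2 : Matrix (Fin 2) (Fin 2) ℂ) = ((eps.2 * q.2 : SL2) : Matrix (Fin 2) (Fin 2) ℂ)
      simp [eps, h2]

lemma card_eq_mul_of_fibers {α β : Type*} [Finite α] [Finite β] (f : α → β) (n : ℕ)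
    (h : ∀ b, Nat.card {a // f a = b} = n) : Nat.card α = Nat.card β * n := by
  classical
  cases nonempty_fintype α
  cases nonempty_fintype β
  rw [← Nat.card_congr (Equiv.sigmaFiberEquiv f), Nat.card_eq_fintype_card,
    Fintype.card_sigma]
  have : ∀ b : β, Fintype.card {a // f a = b} = n := fun b => by
    rw [← Nat.card_eq_fintype_card]; exact h b
  simp only [this, Finset.sum_const, smul_eq_mul, Finset.card_univ, Nat.card_eq_fintype_card]

-- finiteness of ConjClasses
example (α : Type*) [Group α] [Finite α] : Finite (ConjClasses α) := by infer_instance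

-- conjugation preserves first coordinate
lemma conj_fst (x y : P2) : (y * x * y⁻¹).1 = x.1 := by
  simp [mul_comm]

lemma mu_scalar (z : ℂˣ) : mu (z, (1 : SL2)) = scalarGL z := by
  show scalarGL z * Matrix.SpecialLinearGroup.toGL 1 = scalarGL z
  simp

set_option maxHeartbeats 1000000 in
/-- Let `G ⊂ GL(2, ℂ)` be a finite subgroup containing `-I`,
let `Z = {λ ∈ ℂˣ : λI ∈ G}` and let
`H = {h ∈ SL(2, ℂ) : λ·h ∈ G for some λ ∈ ℂˣ}`. Then
`2·c(G) = c(H)·|Z|`, where `c(−)` is the number of conjugacy classes. -/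
theorem conjClasses_card_eq_of_neg_one_mem
    (G : Subgroup (GL (Fin 2) ℂ)) (hGfin : (G : Set (GL (Fin 2) ℂ)).Finite)
    (hnegI : (-1 : GL (Fin 2) ℂ) ∈ G) :
    2 * Nat.card (ConjClasses ↥G)
      = Nat.card (ConjClasses
          ↥(Subgroup.map (MonoidHom.snd ℂˣ (Matrix.SpecialLinearGroup (Fin 2) ℂ))
              (Subgroup.comap mu G)))
        * Nat.card ↥(Subgroup.comap scalarGL G) := by
  classical
  set K : Subgroup P2 := Subgroup.comap mu G with hK
  set Hs := Subgroup.map (MonoidHom.snd ℂˣ SL2) K with hHs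
  set Z := Subgroup.comap scalarGL G with hZ
  -- Finiteness
  haveI hGf : Finite ↥G := hGfin.to_subtype
  have hKfin : (K : Set P2).Finite := by
    choose s hs using mu_surjective
    have hsub : (K : Set P2) ⊆ s '' (G : Set _) ∪ (fun g => eps * s g) '' (G : Set _) := by
      intro p hp
      have hgm : mu p ∈ G := hp
      rcases mu_eq_mu p (s (mu p)) (by rw [hs]) with h1 | h1
      · exact Or.inl ⟨mu p, hgm, h1.symm⟩
      · exact Or.inr ⟨mu p, hgm, h1.symm⟩
    exact ((hGfin.image _).union (hGfin.image _)).subset hsub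
  haveI hKf : Finite ↥K := hKfin.to_subtype
  haveI hHf : Finite ↥Hs := by
    have : (Hs : Set SL2).Finite := by
      rw [hHs, Subgroup.coe_map]
      exact hKfin.image _
    exact this.to_subtype
  haveI hZf : Finite ↥Z := by
    have hinj : Function.Injective scalarGL := by
      apply Units.map_injective
      intro a b hab
      exact Matrix.scalar_inj.mp hab
    have : (Z : Set ℂˣ).Finite := by
      rw [hZ, Subgroup.coe_comap]
      exact hGfin.preimage hinj.injOn
    exact this.to_subtype
  -- the two homomorphisms
  set φ : ↥K →* ↥Hs := (MonoidHom.snd ℂˣ SL2).subgroupMap K with hφ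
  set ψ : ↥K →* ↥G := (mu.comp K.subtype).codRestrict G (fun x => x.2) with hψ
  have hlift : ∀ u : ↥G, ∃ q : ↥K, ψ q = u := by
    intro u
    obtain ⟨p, hp⟩ := mu_surjective (u : GL (Fin 2) ℂ)
    have hpK : p ∈ K := by show mu p ∈ G; rw [hp]; exact u.2
    exact ⟨⟨p, hpK⟩, Subtype.ext hp⟩
  -- fibers of map ψ have two elements
  have fiberB : ∀ b : ConjClasses ↥G,
      Nat.card {c : ConjClasses ↥K // ConjClasses.map ψ c = b} = 2 := by
    intro b
    obtain ⟨y, rfl⟩ := ConjClasses.exists_rep b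
    obtain ⟨pK, hpK⟩ := hlift y
    have hεK : eps ∈ K := by show mu eps ∈ G; rw [mu_eps]; exact one_mem G
    set eK : ↥K := ⟨eps, hεK⟩ with heK
    rw [Nat.card_eq_two_iff]
    have hc1 : ConjClasses.map ψ (ConjClasses.mk pK) = ConjClasses.mk y := by
      show ConjClasses.mk (ψ pK) = _
      rw [hpK]
    have hc2 : ConjClasses.map ψ (ConjClasses.mk (eK * pK)) = ConjClasses.mk y := by
      show ConjClasses.mk (ψ (eK * pK)) = _
      have h1 : ψ eK = 1 := by
        apply Subtype.ext; show mu eps = _; rw [mu_eps]; rfl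
      rw [_root_.map_mul, h1, one_mul, hpK]
    refine ⟨⟨ConjClasses.mk pK, hc1⟩, ⟨ConjClasses.mk (eK * pK), hc2⟩, ?_, ?_⟩
    · intro hEq
      have hEq' : ConjClasses.mk pK = ConjClasses.mk (eK * pK) :=
        congrArg Subtype.val hEq
      obtain ⟨r, hr⟩ := isConj_iff.mp (ConjClasses.mk_eq_mk_iff_isConj.mp hEq')
      have h1 : (((r * pK * r⁻¹ : ↥K) : P2)).1 = ((pK : P2)).1 :=
        conj_fst (pK : P2) (r : P2)
      rw [hr] at h1
      have h3 : (-1 : ℂˣ) * ((pK : P2)).1 = ((pK : P2)).1 := h1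
      have h4 : -((((pK : P2)).1 : ℂ)) = (((pK : P2)).1 : ℂ) := by
        simpa using congrArg Units.val h3
      have h5 : ((((pK : P2)).1 : ℂ)) = 0 := by linear_combination -h4/2
      exact Units.ne_zero _ h5
    · rw [Set.eq_univ_iff_forall]
      rintro ⟨c, hc⟩
      obtain ⟨x, rfl⟩ := ConjClasses.exists_rep c
      obtain ⟨u, hu⟩ := isConj_iff.mp (ConjClasses.mk_eq_mk_iff_isConj.mp hc)
      obtain ⟨q, hq⟩ := hlift u
      have hmueq : mu ((q * x * q⁻¹ : ↥K) : P2) = mu ((pK : ↥K) : P2) := by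
        have h2 : ψ (q * x * q⁻¹) = y := by
          rw [_root_.map_mul, _root_.map_mul, map_inv, hq, hu]
        have h3 := congrArg Subtype.val h2
        have h4 := congrArg Subtype.val hpK
        exact h3.trans h4.symm
      rcases mu_eq_mu _ _ hmueq with he | he
      · have : (q * x * q⁻¹ : ↥K) = pK := Subtype.ext he
        have hmk : ConjClasses.mk x = ConjClasses.mk pK :=
          ConjClasses.mk_eq_mk_iff_isConj.mpr (isConj_iff.mpr ⟨q, this⟩)
        exact Or.inl (Subtype.ext hmk)
      · have hval : ((q * x * q⁻¹ : ↥K) : P2) = ((eK * pK : ↥K) : P2) := he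
        have : (q * x * q⁻¹ : ↥K) = eK * pK := Subtype.ext hval
        have hmk : ConjClasses.mk x = ConjClasses.mk (eK * pK) :=
          ConjClasses.mk_eq_mk_iff_isConj.mpr (isConj_iff.mpr ⟨q, this⟩)
        exact Or.inr (Subtype.ext hmk)
  -- fibers of map φ have |Z| elements
  have fiberA : ∀ b : ConjClasses ↥Hs,
      Nat.card {c : ConjClasses ↥K // ConjClasses.map φ c = b} = Nat.card ↥Z := by
    intro b
    obtain ⟨y, rfl⟩ := ConjClasses.exists_rep b
    obtain ⟨q0, hq0K, hq02⟩ := y.2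
    have hl0 : ((q0.1, (y : SL2)) : P2) ∈ K := by
      have heq : ((q0.1, (y : SL2)) : P2) = q0 := Prod.ext rfl hq02.symm
      rw [heq]; exact hq0K
    have memK : ∀ z : ↥Z, ((q0.1 * (z : ℂˣ), (y : SL2)) : P2) ∈ K := by
      intro z
      have hz : (((z : ℂˣ), (1 : SL2)) : P2) ∈ K := by
        show mu ((z : ℂˣ), (1 : SL2)) ∈ G
        rw [mu_scalar]; exact z.2
      have hmul := mul_mem hl0 hz
      simpa using hmul
    set F : ↥Z → {c : ConjClasses ↥K // ConjClasses.map φ c = ConjClasses.mk y} :=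
      fun z => ⟨ConjClasses.mk ⟨(q0.1 * z, (y : SL2)), memK z⟩, by
        show ConjClasses.mk (φ ⟨(q0.1 * z, (y : SL2)), memK z⟩) = ConjClasses.mk y
        have hφval : φ ⟨(q0.1 * z, (y : SL2)), memK z⟩ = y := Subtype.ext rfl
        rw [hφval]⟩ with hF
    have hbij : Function.Bijective F := by
      constructor
      · intro z₁ z₂ hzz
        have hEq' : ConjClasses.mk (⟨(q0.1 * z₁, (y : SL2)), memK z₁⟩ : ↥K)
            = ConjClasses.mk (⟨(q0.1 * z₂, (y : SL2)), memK z₂⟩ : ↥K) :=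
          congrArg Subtype.val hzz
        obtain ⟨r, hr⟩ := isConj_iff.mp (ConjClasses.mk_eq_mk_iff_isConj.mp hEq')
        have h1 : (((r * ⟨(q0.1 * z₁, (y : SL2)), memK z₁⟩ * r⁻¹ : ↥K) : P2)).1
            = q0.1 * z₁ := conj_fst _ (r : P2)
        rw [hr] at h1
        have h2 : q0.1 * (z₂ : ℂˣ) = q0.1 * (z₁ : ℂˣ) := h1
        exact Subtype.ext (mul_left_cancel h2).symm
      · rintro ⟨c, hc⟩
        obtain ⟨x, rfl⟩ := ConjClasses.exists_rep c
        obtain ⟨u, hu⟩ := isConj_iff.mp (ConjClasses.mk_eq_mk_iff_isConj.mp hc)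
        obtain ⟨q, hqK, hq2⟩ := u.2
        set qK : ↥K := ⟨q, hqK⟩ with hqKdef
        set x' : ↥K := qK * x * qK⁻¹ with hx'
        have hx'1 : ((x' : P2)).1 = ((x : P2)).1 := conj_fst (x : P2) (q : P2)
        have hx'2 : ((x' : P2)).2 = (y : SL2) := by
          have h3 : (u : SL2) * (((φ x : ↥Hs)) : SL2) * ((u : SL2))⁻¹ = (y : SL2) :=
            congrArg Subtype.val hu
          have hq2' : q.2 = (u : SL2) := hq2
          show q.2 * ((x : P2)).2 * q.2⁻¹ = (y : SL2)
          rw [hq2']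
          exact h3
        have hx'K : ((((x : P2)).1, (y : SL2)) : P2) ∈ K := by
          have heq : ((x' : ↥K) : P2) = ((((x : P2)).1, (y : SL2)) : P2) :=
            Prod.ext hx'1 hx'2
          rw [← heq]; exact x'.2
        have hzZ : q0.1⁻¹ * ((x : P2)).1 ∈ Z := by
          have hmem : ((q0.1⁻¹ * ((x : P2)).1, (1 : SL2)) : P2) ∈ K := by
            have hmul := mul_mem (inv_mem hl0) hx'K
            simpa using hmul
          show scalarGL (q0.1⁻¹ * ((x : P2)).1) ∈ G
          rw [← mu_scalar]; exact hmem
        set z : ↥Z := ⟨q0.1⁻¹ * ((x : P2)).1, hzZ⟩ with hzdef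
        refine ⟨z, ?_⟩
        apply Subtype.ext
        show ConjClasses.mk (⟨(q0.1 * (z : ℂˣ), (y : SL2)), memK z⟩ : ↥K)
            = ConjClasses.mk x
        have hval : ((q0.1 * (z : ℂˣ), (y : SL2)) : P2) = ((x' : ↥K) : P2) := by
          refine Prod.ext ?_ hx'2.symm
          show q0.1 * (q0.1⁻¹ * ((x : P2)).1) = ((x' : P2)).1
          rw [hx'1, mul_inv_cancel_left]
        have heq2 : (⟨(q0.1 * (z : ℂˣ), (y : SL2)), memK z⟩ : ↥K) = x' :=
          Subtype.ext hval
        rw [heq2]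
        exact (ConjClasses.mk_eq_mk_iff_isConj.mpr (isConj_iff.mpr ⟨qK, rfl⟩)).symm
    exact Nat.card_congr (Equiv.ofBijective F hbij).symm
  have h1 := card_eq_mul_of_fibers (ConjClasses.map φ) (Nat.card ↥Z) fiberA
  have h2 := card_eq_mul_of_fibers (ConjClasses.map ψ) 2 fiberB
  rw [h2] at h1
  rw [mul_comm] at h1
  exact h1
end

section
/- Let H be a finite non-abelian subgroup of SL(2, ℂ) with −I ∈ H, acting on the set of lines in ℂ². Let L₁, L₂, L₃ be representatives of the three H-orbits of lines whose stabilizer in H strictly contains {I, −I}. Then |Stab_H(L₁)| + |Stab_H(L₂)| + |Stab_H(L₃)| = 2·(c(H) + 1), where Stab_H(L) = {h ∈ H : h(L) = L} and c(H) is the number of conjugacy classes of H. -/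
open Matrix

/-- The image `h(L)` of a subspace `L ⊆ ℂ²` under `h ∈ SL(2, ℂ)`. -/
noncomputable def lineImageSL (h : Matrix.SpecialLinearGroup (Fin 2) ℂ)
    (L : Submodule ℂ (Fin 2 → ℂ)) : Submodule ℂ (Fin 2 → ℂ) :=
  L.map (Matrix.mulVecLin (h : Matrix (Fin 2) (Fin 2) ℂ))

/-- The setwise stabilizer `{h ∈ H : h(L) = L}` of a subspace `L`. -/
def lineStabSetSL (H : Subgroup (Matrix.SpecialLinearGroup (Fin 2) ℂ))
    (L : Submodule ℂ (Fin 2 → ℂ)) : Set (Matrix.SpecialLinearGroup (Fin 2) ℂ) :=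
  {h | h ∈ H ∧ lineImageSL h L = L}

/-- Two subspaces lie in the same `H`-orbit. -/
def sameHOrbit (H : Subgroup (Matrix.SpecialLinearGroup (Fin 2) ℂ))
    (L L' : Submodule ℂ (Fin 2 → ℂ)) : Prop :=
  ∃ h ∈ H, lineImageSL h L = L'

set_option synthInstance.maxHeartbeats 1000000
set_option maxHeartbeats 1000000

namespace MckayAux

abbrev G2 := Matrix.SpecialLinearGroup (Fin 2) ℂ

lemma mulVec_apply_two (M : Matrix (Fin 2) (Fin 2) ℂ) (v : Fin 2 → ℂ) (i : Fin 2) :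
    M.mulVec v i = M i 0 * v 0 + M i 1 * v 1 := by
  simp [Matrix.mulVec, dotProduct, Fin.sum_univ_two]

lemma ker_line {M : Matrix (Fin 2) (Fin 2) ℂ} (hM : M ≠ 0) {v w : Fin 2 → ℂ}
    (hv : v ≠ 0) (h1 : M.mulVec v = 0) (h2 : M.mulVec w = 0) : ∃ c : ℂ, w = c • v := by
  by_cases hc : v 0 * w 1 - v 1 * w 0 = 0
  · rcases Function.ne_iff.1 hv with ⟨i, hi⟩
    fin_cases i
    · have hv0 : v 0 ≠ 0 := by simpa using hi
      refine ⟨w 0 / v 0, ?_⟩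
      funext j
      fin_cases j
      · show w 0 = w 0 / v 0 * v 0
        rw [div_mul_cancel₀ _ hv0]
      · show w 1 = w 0 / v 0 * v 1
        field_simp
        linear_combination hc
    · have hv1 : v 1 ≠ 0 := by simpa using hi
      refine ⟨w 1 / v 1, ?_⟩
      funext j
      fin_cases j
      · show w 0 = w 1 / v 1 * v 0
        field_simp
        linear_combination -hc
      · show w 1 = w 1 / v 1 * v 1
        rw [div_mul_cancel₀ _ hv1]
  · exfalso
    apply hM
    ext i j
    have e1 : M i 0 * v 0 + M i 1 * v 1 = 0 := by
      rw [← mulVec_apply_two]; rw [h1]; rfl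
    have e2 : M i 0 * w 0 + M i 1 * w 1 = 0 := by
      rw [← mulVec_apply_two]; rw [h2]; rfl
    have z0 : M i 0 * (v 0 * w 1 - v 1 * w 0) = 0 := by linear_combination w 1 * e1 - v 1 * e2
    have z1 : M i 1 * (v 0 * w 1 - v 1 * w 0) = 0 := by linear_combination v 0 * e2 - w 0 * e1
    fin_cases j
    · simpa using (mul_eq_zero.1 z0).resolve_right hc
    · simpa using (mul_eq_zero.1 z1).resolve_right hc

lemma det_sub_smul (M : Matrix (Fin 2) (Fin 2) ℂ) (μ : ℂ) :
    (M - μ • 1).det = μ ^ 2 - (M 0 0 + M 1 1) * μ + M.det := by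
  simp [Matrix.det_fin_two, Matrix.one_apply]
  ring

lemma fix_one {g : Matrix (Fin 2) (Fin 2) ℂ} (hdet : g.det = 1) {n : ℕ} (hn : 0 < n)
    (hg : g ^ n = 1) {v : Fin 2 → ℂ} (hv : v ≠ 0) (hfix : g.mulVec v = v) : g = 1 := by
  have hker : (g - 1).mulVec v = 0 := by
    rw [Matrix.sub_mulVec, hfix, Matrix.one_mulVec, sub_self]
  have hdz : (g - 1).det = 0 := by
    rw [← Matrix.exists_mulVec_eq_zero_iff]
    exact ⟨v, hv, hker⟩
  have htr : g 0 0 + g 1 1 = 2 := by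
    have h1 := det_sub_smul g 1
    rw [one_smul] at h1
    rw [hdz, hdet] at h1
    linear_combination h1
  have hdet' : g 0 0 * g 1 1 - g 0 1 * g 1 0 = 1 := by
    rw [← Matrix.det_fin_two, hdet]
  have hN2 : (g - 1) * (g - 1) = 0 := by
    ext i j
    fin_cases i <;> fin_cases j
    · simp [Matrix.mul_apply, Fin.sum_univ_two, Matrix.one_apply]
      linear_combination (g 0 0) * htr - hdet'
    · simp [Matrix.mul_apply, Fin.sum_univ_two, Matrix.one_apply]
      linear_combination (g 0 1) * htr
    · simp [Matrix.mul_apply, Fin.sum_univ_two, Matrix.one_apply]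
      linear_combination (g 1 0) * htr
    · simp [Matrix.mul_apply, Fin.sum_univ_two, Matrix.one_apply]
      linear_combination (g 1 1) * htr - hdet'
  have key : ∀ k : ℕ, g ^ k = 1 + (k : ℂ) • (g - 1) := by
    intro k
    induction k with
    | zero => simp
    | succ k ih =>
      have h3 : (g - 1) * g = g - 1 := by
        calc (g - 1) * g = (g - 1) * (g - 1) + (g - 1) * 1 := by rw [← mul_add, sub_add_cancel]
        _ = g - 1 := by rw [hN2, zero_add, mul_one]
      calc g ^ (k + 1) = (1 + (k : ℂ) • (g - 1)) * g := by rw [pow_succ, ih]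
      _ = g + (k : ℂ) • (g - 1) := by rw [add_mul, one_mul, smul_mul_assoc, h3]
      _ = 1 + ((k : ℕ) + 1 : ℂ) • (g - 1) := by rw [add_smul, one_smul]; abel
      _ = 1 + (((k + 1 : ℕ)) : ℂ) • (g - 1) := by push_cast; ring_nf
  have h4 := key n
  rw [hg] at h4
  have h5 : ((n : ℂ)) • (g - 1) = 0 := by
    have := h4.symm
    rwa [add_eq_left] at this
  have h6 : g - 1 = 0 := by
    rcases smul_eq_zero.1 h5 with h | h
    · exact absurd h (by exact_mod_cast hn.ne')
    · exact h
  rw [sub_eq_zero] at h6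
  exact h6

lemma fix_neg_one {g : Matrix (Fin 2) (Fin 2) ℂ} (hdet : g.det = 1) {n : ℕ} (hn : 0 < n)
    (hg : g ^ n = 1) {v : Fin 2 → ℂ} (hv : v ≠ 0) (hfix : g.mulVec v = -v) : g = -1 := by
  have hdet' : (-g).det = 1 := by
    rw [Matrix.det_neg]; simp [hdet]
  have hord : (-g) ^ (2 * n) = 1 := by
    rw [neg_pow, mul_comm 2 n, pow_mul, pow_mul, hg, one_pow, mul_one]
    rw [← pow_mul, mul_comm n 2, pow_mul]
    norm_num
  have hfix' : (-g).mulVec v = v := by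
    rw [Matrix.neg_mulVec, hfix, neg_neg]
  have := fix_one hdet' (by positivity) hord hv hfix'
  rw [← neg_eq_iff_eq_neg]
  exact this


lemma lineImage_one (L : Submodule ℂ (Fin 2 → ℂ)) : lineImageSL 1 L = L := by
  unfold lineImageSL
  simp [Matrix.SpecialLinearGroup.coe_one, Matrix.mulVecLin_one, Submodule.map_id]

lemma lineImage_mul (g h : G2) (L : Submodule ℂ (Fin 2 → ℂ)) :
    lineImageSL (g * h) L = lineImageSL g (lineImageSL h L) := by
  unfold lineImageSL
  rw [Matrix.SpecialLinearGroup.coe_mul, Matrix.mulVecLin_mul, Submodule.map_comp]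

noncomputable instance : MulAction G2 (Submodule ℂ (Fin 2 → ℂ)) where
  smul g L := lineImageSL g L
  one_smul L := lineImage_one L
  mul_smul g h L := lineImage_mul g h L

lemma smul_def (g : G2) (L : Submodule ℂ (Fin 2 → ℂ)) : g • L = lineImageSL g L := rfl

noncomputable instance (H : Subgroup G2) : MulAction ↥H (Submodule ℂ (Fin 2 → ℂ)) :=
  MulAction.compHom _ H.subtype

lemma smul_def' (H : Subgroup G2) (g : ↥H) (L : Submodule ℂ (Fin 2 → ℂ)) :
    g • L = lineImageSL (g : G2) L := rfl

lemma lineImage_span (g : G2) (v : Fin 2 → ℂ) :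
    lineImageSL g (Submodule.span ℂ {v}) = Submodule.span ℂ {(g : Matrix (Fin 2) (Fin 2) ℂ).mulVec v} := by
  unfold lineImageSL
  rw [Submodule.map_span, Set.image_singleton, Matrix.mulVecLin_apply]

lemma lineImage_neg_one (L : Submodule ℂ (Fin 2 → ℂ)) : lineImageSL (-1) L = L := by
  unfold lineImageSL
  ext x
  simp only [Submodule.mem_map, Matrix.mulVecLin_apply]
  constructor
  · rintro ⟨y, hy, rfl⟩
    have : ((-1 : G2) : Matrix (Fin 2) (Fin 2) ℂ).mulVec y = -y := by
      rw [Matrix.SpecialLinearGroup.coe_neg, Matrix.SpecialLinearGroup.coe_one,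
        Matrix.neg_mulVec, Matrix.one_mulVec]
    rw [this]
    exact L.neg_mem hy
  · intro hx
    refine ⟨-x, L.neg_mem hx, ?_⟩
    rw [Matrix.SpecialLinearGroup.coe_neg, Matrix.SpecialLinearGroup.coe_one,
      Matrix.neg_mulVec, Matrix.one_mulVec, neg_neg]

lemma mulVec_ne_zero (g : G2) {v : Fin 2 → ℂ} (hv : v ≠ 0) :
    (g : Matrix (Fin 2) (Fin 2) ℂ).mulVec v ≠ 0 := by
  intro h0
  have : ((g : Matrix (Fin 2) (Fin 2) ℂ)).det = 0 :=
    Matrix.exists_mulVec_eq_zero_iff.mp ⟨v, hv, h0⟩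
  rw [g.2] at this
  exact one_ne_zero this

lemma inv_mulVec (A : G2) {v w : Fin 2 → ℂ}
    (h : (A : Matrix (Fin 2) (Fin 2) ℂ).mulVec v = w) :
    ((A⁻¹ : G2) : Matrix (Fin 2) (Fin 2) ℂ).mulVec w = v := by
  rw [← h, Matrix.mulVec_mulVec, ← Matrix.SpecialLinearGroup.coe_mul, inv_mul_cancel,
    Matrix.SpecialLinearGroup.coe_one, Matrix.one_mulVec]

lemma neg_one_ne_one : (-1 : G2) ≠ 1 := by
  intro h
  have := congrArg (fun g : G2 => (g : Matrix (Fin 2) (Fin 2) ℂ) 0 0) h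
  simp only [Matrix.SpecialLinearGroup.coe_neg, Matrix.SpecialLinearGroup.coe_one,
    Matrix.neg_apply, Matrix.one_apply_eq] at this
  norm_num at this

/-- Membership in the stabilizer of a spanned line. -/
lemma stab_span_iff (H : Subgroup G2) {v : Fin 2 → ℂ} (hv : v ≠ 0) (g : G2) :
    g ∈ lineStabSetSL H (Submodule.span ℂ {v}) ↔
      g ∈ H ∧ ∃ μ : ℂ, μ ≠ 0 ∧ (g : Matrix (Fin 2) (Fin 2) ℂ).mulVec v = μ • v := by
  constructor
  · rintro ⟨hgH, himg⟩
    refine ⟨hgH, ?_⟩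
    have hmem : (g : Matrix (Fin 2) (Fin 2) ℂ).mulVec v ∈ Submodule.span ℂ {v} := by
      rw [← himg, lineImage_span]
      exact Submodule.mem_span_singleton_self _
    rcases Submodule.mem_span_singleton.mp hmem with ⟨μ, hμ⟩
    refine ⟨μ, ?_, hμ.symm⟩
    intro h0
    rw [h0, zero_smul] at hμ
    exact mulVec_ne_zero g hv hμ.symm
  · rintro ⟨hgH, μ, hμ0, hμ⟩
    refine ⟨hgH, ?_⟩
    rw [lineImage_span, hμ, Submodule.span_singleton_smul_eq (IsUnit.mk0 μ hμ0)]

lemma stab_comm (H : Subgroup G2) {n : ℕ} (hn : 0 < n) (hord : ∀ g ∈ H, g ^ n = 1)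
    {v : Fin 2 → ℂ} (hv : v ≠ 0) {g₁ g₂ : G2}
    (h₁ : g₁ ∈ lineStabSetSL H (Submodule.span ℂ {v}))
    (h₂ : g₂ ∈ lineStabSetSL H (Submodule.span ℂ {v})) : g₁ * g₂ = g₂ * g₁ := by
  rcases (stab_span_iff H hv g₁).mp h₁ with ⟨hg₁H, μ₁, hμ₁0, hμ₁⟩
  rcases (stab_span_iff H hv g₂).mp h₂ with ⟨hg₂H, μ₂, hμ₂0, hμ₂⟩
  set c : G2 := (g₂ * g₁)⁻¹ * (g₁ * g₂) with hc
  have hcH : c ∈ H := H.mul_mem (H.inv_mem (H.mul_mem hg₂H hg₁H)) (H.mul_mem hg₁H hg₂H)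
  have h12 : ((g₁ * g₂ : G2) : Matrix (Fin 2) (Fin 2) ℂ).mulVec v = (μ₁ * μ₂) • v := by
    rw [Matrix.SpecialLinearGroup.coe_mul, ← Matrix.mulVec_mulVec, hμ₂, Matrix.mulVec_smul, hμ₁,
      smul_smul, mul_comm]
  have h21 : ((g₂ * g₁ : G2) : Matrix (Fin 2) (Fin 2) ℂ).mulVec v = (μ₁ * μ₂) • v := by
    rw [Matrix.SpecialLinearGroup.coe_mul, ← Matrix.mulVec_mulVec, hμ₁, Matrix.mulVec_smul, hμ₂,
      smul_smul]
  have hcv : (c : Matrix (Fin 2) (Fin 2) ℂ).mulVec v = v := by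
    rw [hc, Matrix.SpecialLinearGroup.coe_mul, ← Matrix.mulVec_mulVec, h12]
    exact inv_mulVec _ h21
  have hcn : (c : Matrix (Fin 2) (Fin 2) ℂ) ^ n = 1 := by
    rw [← Matrix.SpecialLinearGroup.coe_pow, hord c hcH, Matrix.SpecialLinearGroup.coe_one]
  have hc1 : (c : Matrix (Fin 2) (Fin 2) ℂ) = 1 := fix_one c.2 hn hcn hv hcv
  have : c = 1 := Subtype.ext (by rw [hc1, Matrix.SpecialLinearGroup.coe_one])
  rw [hc] at this
  have := inv_mul_eq_one.mp this
  exact this.symm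


/-- Eigen-structure of a finite-order, non-central element of `SL(2,ℂ)`. -/
lemma eigen (h : G2) {n : ℕ} (hn : 0 < n) (hord : h ^ n = 1) (h1 : h ≠ 1) (hm1 : h ≠ -1) :
    ∃ (l₁ l₂ : ℂ) (v₁ v₂ : Fin 2 → ℂ), l₁ * l₂ = 1 ∧ l₁ ≠ l₂ ∧ v₁ ≠ 0 ∧ v₂ ≠ 0 ∧
      (h : Matrix (Fin 2) (Fin 2) ℂ).mulVec v₁ = l₁ • v₁ ∧
      (h : Matrix (Fin 2) (Fin 2) ℂ).mulVec v₂ = l₂ • v₂ ∧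
      ∀ (μ : ℂ) (w : Fin 2 → ℂ), w ≠ 0 → (h : Matrix (Fin 2) (Fin 2) ℂ).mulVec w = μ • w →
        (μ = l₁ ∧ ∃ c : ℂ, w = c • v₁) ∨ (μ = l₂ ∧ ∃ c : ℂ, w = c • v₂) := by
  set M : Matrix (Fin 2) (Fin 2) ℂ := (h : Matrix (Fin 2) (Fin 2) ℂ) with hM
  have hdet : M.det = 1 := h.2
  have hMn : M ^ n = 1 := by
    rw [hM, ← Matrix.SpecialLinearGroup.coe_pow, hord, Matrix.SpecialLinearGroup.coe_one]
  set t : ℂ := M 0 0 + M 1 1 with ht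
  have ht2 : t ≠ 2 := by
    intro htt
    have hdz : (M - (1 : ℂ) • 1).det = 0 := by
      rw [det_sub_smul, hdet, ← ht, htt]; ring
    rcases Matrix.exists_mulVec_eq_zero_iff.mpr hdz with ⟨v, hv, hker⟩
    have hfix : M.mulVec v = v := by
      have := hker
      rw [Matrix.sub_mulVec, smul_mulVec, Matrix.one_mulVec, sub_eq_zero] at this
      rw [this, one_smul]
    refine h1 (Subtype.ext ?_)
    rw [Matrix.SpecialLinearGroup.coe_one, ← hM]
    exact fix_one hdet hn hMn hv hfix
  have htm2 : t ≠ -2 := by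
    intro htt
    have hdz : (M - (-1 : ℂ) • 1).det = 0 := by
      rw [det_sub_smul, hdet, ← ht, htt]; ring
    rcases Matrix.exists_mulVec_eq_zero_iff.mpr hdz with ⟨v, hv, hker⟩
    have hfix : M.mulVec v = -v := by
      have := hker
      rw [Matrix.sub_mulVec, smul_mulVec, Matrix.one_mulVec, sub_eq_zero] at this
      rw [this, neg_one_smul]
    refine hm1 (Subtype.ext ?_)
    rw [Matrix.SpecialLinearGroup.coe_neg, Matrix.SpecialLinearGroup.coe_one, ← hM]
    exact fix_neg_one hdet hn hMn hv hfix
  obtain ⟨z, hz⟩ : ∃ z : ℂ, z ^ 2 = t ^ 2 - 4 := IsAlgClosed.exists_pow_nat_eq _ two_pos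
  have hz0 : z ≠ 0 := by
    intro h0
    rw [h0] at hz
    have : (t - 2) * (t + 2) = 0 := by linear_combination -hz
    rcases mul_eq_zero.1 this with ht' | ht'
    · exact ht2 (by linear_combination ht')
    · exact htm2 (by linear_combination ht')
  set l₁ : ℂ := (t + z) / 2 with hl₁
  set l₂ : ℂ := (t - z) / 2 with hl₂
  have hprod : l₁ * l₂ = 1 := by
    rw [hl₁, hl₂]
    field_simp
    linear_combination -hz
  have hsum : l₁ + l₂ = t := by rw [hl₁, hl₂]; ring
  have hne : l₁ ≠ l₂ := by
    intro hll
    apply hz0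
    have : (t + z) / 2 = (t - z) / 2 := hll
    field_simp at this
    linear_combination this / 2
  have hchar : ∀ μ : ℂ, (M - μ • 1).det = (μ - l₁) * (μ - l₂) := by
    intro μ
    rw [det_sub_smul, hdet, ← ht]
    linear_combination μ * hsum - hprod
  obtain ⟨v₁, hv₁, hker₁⟩ := Matrix.exists_mulVec_eq_zero_iff.mpr
    (show (M - l₁ • 1).det = 0 by rw [hchar]; ring)
  obtain ⟨v₂, hv₂, hker₂⟩ := Matrix.exists_mulVec_eq_zero_iff.mpr
    (show (M - l₂ • 1).det = 0 by rw [hchar]; ring)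
  have hev : ∀ (l : ℂ) (v : Fin 2 → ℂ), (M - l • 1).mulVec v = 0 → M.mulVec v = l • v := by
    intro l v hker
    rw [Matrix.sub_mulVec, smul_mulVec, Matrix.one_mulVec, sub_eq_zero] at hker
    exact hker
  have hev₁ : M.mulVec v₁ = l₁ • v₁ := hev _ _ hker₁
  have hev₂ : M.mulVec v₂ = l₂ • v₂ := hev _ _ hker₂
  have hMl : ∀ l : ℂ, l = l₁ ∨ l = l₂ → M - l • 1 ≠ 0 := by
    rintro l hl h0
    have hMeq : M = l • 1 := by rwa [sub_eq_zero] at h0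
    have hdet2 : l ^ 2 = 1 := by
      have := hdet
      rw [hMeq, Matrix.det_smul, Matrix.det_one, mul_one] at this
      simpa using this
    -- then l₂ = l₁⁻¹ = l, forcing l₁ = l₂
    apply hne
    rcases hl with rfl | rfl
    · have : l₁ * l₂ = l₁ * l₁ := by rw [hprod]; linear_combination -hdet2
      exact (mul_left_cancel₀ (by intro hl0; rw [hl0] at hdet2; norm_num at hdet2) this).symm
    · have : l₂ * l₁ = l₂ * l₂ := by rw [mul_comm, hprod]; linear_combination -hdet2
      exact mul_left_cancel₀ (by intro hl0; rw [hl0] at hdet2; norm_num at hdet2) this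
  refine ⟨l₁, l₂, v₁, v₂, hprod, hne, hv₁, hv₂, hev₁, hev₂, ?_⟩
  intro μ w hw hmw
  have hkerw : (M - μ • 1).mulVec w = 0 := by
    rw [Matrix.sub_mulVec, smul_mulVec, Matrix.one_mulVec, hmw, sub_self]
  have hdzw : (M - μ • 1).det = 0 := Matrix.exists_mulVec_eq_zero_iff.mp ⟨w, hw, hkerw⟩
  rw [hchar] at hdzw
  rcases mul_eq_zero.1 hdzw with hμ | hμ
  · left
    have hμ' : μ = l₁ := by linear_combination hμ
    rw [hμ'] at hkerw
    exact ⟨hμ', ker_line (hMl l₁ (Or.inl rfl)) hv₁ hker₁ hkerw⟩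
  · right
    have hμ' : μ = l₂ := by linear_combination hμ
    rw [hμ'] at hkerw
    exact ⟨hμ', ker_line (hMl l₂ (Or.inr rfl)) hv₂ hker₂ hkerw⟩



lemma span_eq_of_smul {v : Fin 2 → ℂ} {c : ℂ} (hv : v ≠ 0) {w : Fin 2 → ℂ} (hw : w ≠ 0)
    (h : w = c • v) : Submodule.span ℂ {w} = Submodule.span ℂ {v} := by
  have hc : c ≠ 0 := by
    intro h0
    rw [h0, zero_smul] at h
    exact hw h
  rw [h, Submodule.span_singleton_smul_eq (IsUnit.mk0 c hc)]

/-- For a noncentral finite-order `h ∈ H` there are exactly two invariant lines,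
and on each of them the stabilizer set equals the centralizer of `h` in `H`. -/
lemma key_noncentral (H : Subgroup G2) {n : ℕ} (hn : 0 < n) (hord : ∀ g ∈ H, g ^ n = 1)
    {h : G2} (hh : h ∈ H) (h1 : h ≠ 1) (hm1 : h ≠ -1) :
    ∃ P Q : Submodule ℂ (Fin 2 → ℂ), P ≠ Q ∧
      (∃ v ≠ 0, P = Submodule.span ℂ {v}) ∧ (∃ v ≠ 0, Q = Submodule.span ℂ {v}) ∧
      lineImageSL h P = P ∧ lineImageSL h Q = Q ∧
      (∀ L : Submodule ℂ (Fin 2 → ℂ), (∃ u ≠ 0, L = Submodule.span ℂ {u}) →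
        lineImageSL h L = L → L = P ∨ L = Q) ∧
      lineStabSetSL H P = {g : G2 | g ∈ H ∧ g * h = h * g} ∧
      lineStabSetSL H Q = {g : G2 | g ∈ H ∧ g * h = h * g} := by
  obtain ⟨l₁, l₂, v₁, v₂, hprod, hne, hv₁, hv₂, hev₁, hev₂, hclass⟩ :=
    eigen h hn (hord h hh) h1 hm1
  have hl₁0 : l₁ ≠ 0 := fun h0 => by rw [h0, zero_mul] at hprod; exact zero_ne_one hprod
  have hl₂0 : l₂ ≠ 0 := fun h0 => by rw [h0, mul_zero] at hprod; exact zero_ne_one hprod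
  have heigsp₁ : ∀ w : Fin 2 → ℂ, w ≠ 0 →
      (h : Matrix (Fin 2) (Fin 2) ℂ).mulVec w = l₁ • w → ∃ c : ℂ, w = c • v₁ := by
    intro w hw hew
    rcases hclass l₁ w hw hew with ⟨_, c, hc⟩ | ⟨hll, _, _⟩
    · exact ⟨c, hc⟩
    · exact absurd hll hne
  have heigsp₂ : ∀ w : Fin 2 → ℂ, w ≠ 0 →
      (h : Matrix (Fin 2) (Fin 2) ℂ).mulVec w = l₂ • w → ∃ c : ℂ, w = c • v₂ := by
    intro w hw hew
    rcases hclass l₂ w hw hew with ⟨hll, _, _⟩ | ⟨_, c, hc⟩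
    · exact absurd hll.symm hne
    · exact ⟨c, hc⟩
  set P := Submodule.span ℂ {v₁} with hP
  set Q := Submodule.span ℂ {v₂} with hQ
  have hPQ : P ≠ Q := by
    intro hpq
    have hv₂P : v₂ ∈ P := by rw [hpq]; exact Submodule.mem_span_singleton_self _
    rcases Submodule.mem_span_singleton.mp hv₂P with ⟨c, hc⟩
    have h2 : l₂ • v₂ = l₁ • v₂ := by
      rw [← hev₂, ← hc, Matrix.mulVec_smul, hev₁, smul_smul, smul_smul, mul_comm]
    have h3 : (l₂ - l₁) • v₂ = 0 := by rw [sub_smul, h2, sub_self]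
    rcases smul_eq_zero.1 h3 with h4 | h4
    · exact hne (show l₁ = l₂ by linear_combination -h4)
    · exact hv₂ h4
  have hinvP : lineImageSL h P = P := by
    rw [hP, lineImage_span, hev₁, Submodule.span_singleton_smul_eq (IsUnit.mk0 l₁ hl₁0)]
  have hinvQ : lineImageSL h Q = Q := by
    rw [hQ, lineImage_span, hev₂, Submodule.span_singleton_smul_eq (IsUnit.mk0 l₂ hl₂0)]
  have hclassL : ∀ L : Submodule ℂ (Fin 2 → ℂ), (∃ u ≠ 0, L = Submodule.span ℂ {u}) →
      lineImageSL h L = L → L = P ∨ L = Q := by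
    rintro L ⟨u, hu, rfl⟩ hinv
    have hmem : (h : Matrix (Fin 2) (Fin 2) ℂ).mulVec u ∈ Submodule.span ℂ {u} := by
      rw [← hinv, lineImage_span]
      exact Submodule.mem_span_singleton_self _
    rcases Submodule.mem_span_singleton.mp hmem with ⟨μ, hμ⟩
    rcases hclass μ u hu hμ.symm with ⟨_, c, hc⟩ | ⟨_, c, hc⟩
    · exact Or.inl (span_eq_of_smul hv₁ hu hc)
    · exact Or.inr (span_eq_of_smul hv₂ hu hc)
  have hstab : ∀ (l : ℂ) (v : Fin 2 → ℂ), v ≠ 0 →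
      (h : Matrix (Fin 2) (Fin 2) ℂ).mulVec v = l • v → l ≠ 0 →
      (∀ w : Fin 2 → ℂ, w ≠ 0 →
        (h : Matrix (Fin 2) (Fin 2) ℂ).mulVec w = l • w → ∃ c : ℂ, w = c • v) →
      lineStabSetSL H (Submodule.span ℂ {v}) = {g : G2 | g ∈ H ∧ g * h = h * g} := by
    intro l v hv hev hl0 heigsp
    have hhst : h ∈ lineStabSetSL H (Submodule.span ℂ {v}) :=
      (stab_span_iff H hv h).mpr ⟨hh, l, hl0, hev⟩
    ext g
    constructor
    · intro hg
      exact ⟨hg.1, stab_comm H hn hord hv hg hhst⟩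
    · rintro ⟨hgH, hcomm⟩
      refine (stab_span_iff H hv g).mpr ⟨hgH, ?_⟩
      have hgv0 : (g : Matrix (Fin 2) (Fin 2) ℂ).mulVec v ≠ 0 := mulVec_ne_zero g hv
      have hcomm' : (h : Matrix (Fin 2) (Fin 2) ℂ) * g = (g : Matrix (Fin 2) (Fin 2) ℂ) * h := by
        rw [← Matrix.SpecialLinearGroup.coe_mul, ← Matrix.SpecialLinearGroup.coe_mul, ← hcomm]
      have heig : (h : Matrix (Fin 2) (Fin 2) ℂ).mulVec
          ((g : Matrix (Fin 2) (Fin 2) ℂ).mulVec v) =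
          l • (g : Matrix (Fin 2) (Fin 2) ℂ).mulVec v := by
        rw [Matrix.mulVec_mulVec, hcomm', ← Matrix.mulVec_mulVec, hev, Matrix.mulVec_smul]
      rcases heigsp _ hgv0 heig with ⟨c, hc⟩
      refine ⟨c, ?_, hc⟩
      intro h0
      rw [h0, zero_smul] at hc
      exact hgv0 hc
  exact ⟨P, Q, hPQ, ⟨v₁, hv₁, rfl⟩, ⟨v₂, hv₂, rfl⟩, hinvP, hinvQ, hclassL,
    hstab l₁ v₁ hv₁ hev₁ hl₁0 heigsp₁, hstab l₂ v₂ hv₂ hev₂ hl₂0 heigsp₂⟩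

/-- Stabilizer sets along an orbit are conjugate, hence equicardinal. -/
lemma stab_conj (H : Subgroup G2) {g : G2} (hg : g ∈ H) (L : Submodule ℂ (Fin 2 → ℂ)) :
    lineStabSetSL H (lineImageSL g L) = (fun x => g * x * g⁻¹) '' lineStabSetSL H L := by
  ext x
  constructor
  · rintro ⟨hxH, hximg⟩
    refine ⟨g⁻¹ * x * g, ⟨H.mul_mem (H.mul_mem (H.inv_mem hg) hxH) hg, ?_⟩, by group⟩
    rw [lineImage_mul, lineImage_mul, hximg, ← lineImage_mul, inv_mul_cancel, lineImage_one]
  · rintro ⟨y, ⟨hyH, hyimg⟩, rfl⟩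
    refine ⟨H.mul_mem (H.mul_mem hg hyH) (H.inv_mem hg), ?_⟩
    rw [lineImage_mul, lineImage_mul, ← lineImage_mul g⁻¹, inv_mul_cancel, lineImage_one, hyimg]

lemma stab_card_conj (H : Subgroup G2) {g : G2} (hg : g ∈ H) (L : Submodule ℂ (Fin 2 → ℂ)) :
    (lineStabSetSL H (lineImageSL g L)).ncard = (lineStabSetSL H L).ncard := by
  rw [stab_conj H hg L]
  exact Set.ncard_image_of_injective _ fun a b hab => mul_left_cancel (mul_right_cancel hab)


lemma line_span {L : Submodule ℂ (Fin 2 → ℂ)} (hL : Module.finrank ℂ L = 1) :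
    ∃ v ≠ 0, L = Submodule.span ℂ {v} := by
  have h1 : Module.rank ℂ L = 1 := by
    rw [Module.rank_eq_one_iff_finrank_eq_one]; exact hL
  rcases (rank_submodule_eq_one_iff L).mp h1 with ⟨v, hvL, hv0, hle⟩
  exact ⟨v, hv0, le_antisymm hle (Submodule.span_le.mpr (Set.singleton_subset_iff.mpr hvL))⟩

lemma mem_orbit_of_image (H : Subgroup G2) {g : G2} (hg : g ∈ H)
    {L L' : Submodule ℂ (Fin 2 → ℂ)} (him : lineImageSL g L' = L) :
    L' ∈ MulAction.orbit ↥H L := by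
  refine ⟨(⟨g, hg⟩ : ↥H)⁻¹, ?_⟩
  show lineImageSL (g⁻¹ : G2) L = L'
  rw [← him, ← lineImage_mul, inv_mul_cancel, lineImage_one]

lemma sameHOrbit_of_mem_orbits (H : Subgroup G2) {L₁ L₂ L' : Submodule ℂ (Fin 2 → ℂ)}
    (h1 : L' ∈ MulAction.orbit ↥H L₁) (h2 : L' ∈ MulAction.orbit ↥H L₂) :
    sameHOrbit H L₁ L₂ := by
  rcases h1 with ⟨k, hk⟩
  rcases h2 with ⟨k', hk'⟩
  refine ⟨(k'⁻¹ * k : ↥H), ((k'⁻¹ * k : ↥H)).2, ?_⟩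
  show lineImageSL ((k'⁻¹ * k : ↥H) : G2) L₁ = L₂
  have hco : ((k'⁻¹ * k : ↥H) : G2) = (k'⁻¹ : ↥H) * (k : ↥H) := rfl
  rw [hco, lineImage_mul]
  have hk2 : lineImageSL (k : ↥H) L₁ = L' := hk
  have hk'2 : lineImageSL (k' : ↥H) L₂ = L' := hk'
  rw [hk2, ← hk'2]
  show lineImageSL (((k'⁻¹ : ↥H)) : G2) _ = _
  rw [← lineImage_mul]
  have : ((k'⁻¹ : ↥H) : G2) * (k' : ↥H) = 1 := by
    rw [← Subgroup.coe_mul, inv_mul_cancel, Subgroup.coe_one]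
  rw [this, lineImage_one]

lemma card_stabSet_eq (H : Subgroup G2) [Fintype ↥H] (L : Submodule ℂ (Fin 2 → ℂ)) :
    (lineStabSetSL H L).ncard = Nat.card {h : ↥H // lineImageSL (h : G2) L = L} := by
  rw [← Nat.card_coe_set_eq]
  apply Nat.card_congr
  exact
    { toFun := fun x => ⟨⟨x.1, x.2.1⟩, x.2.2⟩
      invFun := fun x => ⟨x.1.1, x.1.2, x.2⟩
      left_inv := fun _ => rfl
      right_inv := fun _ => rfl }

end MckayAux

open MckayAux in
/-- Let `H ⊂ SL(2, ℂ)` be a finite non-abelian subgroup with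
`-I ∈ H` and let `L₁, L₂, L₃` represent the three `H`-orbits of lines whose
stabilizer strictly contains `{I, -I}`. Then
`|Stab_H(L₁)| + |Stab_H(L₂)| + |Stab_H(L₃)| = 2·(c(H) + 1)`, where `c(H)` is
the number of conjugacy classes of `H`. -/
theorem mckay_stabilizer_count_SL
    (H : Subgroup (Matrix.SpecialLinearGroup (Fin 2) ℂ))
    (hHfin : (H : Set (Matrix.SpecialLinearGroup (Fin 2) ℂ)).Finite)
    (hnab : ¬ ∀ a ∈ H, ∀ b ∈ H, a * b = b * a)
    (hnegI : (-1 : Matrix.SpecialLinearGroup (Fin 2) ℂ) ∈ H)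
    (L₁ L₂ L₃ : Submodule ℂ (Fin 2 → ℂ))
    (hL₁ : Module.finrank ℂ L₁ = 1) (hL₂ : Module.finrank ℂ L₂ = 1)
    (hL₃ : Module.finrank ℂ L₃ = 1)
    (hs₁ : ({1, -1} : Set (Matrix.SpecialLinearGroup (Fin 2) ℂ)) ⊂ lineStabSetSL H L₁)
    (hs₂ : ({1, -1} : Set (Matrix.SpecialLinearGroup (Fin 2) ℂ)) ⊂ lineStabSetSL H L₂)
    (hs₃ : ({1, -1} : Set (Matrix.SpecialLinearGroup (Fin 2) ℂ)) ⊂ lineStabSetSL H L₃)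
    (hd₁₂ : ¬ sameHOrbit H L₁ L₂) (hd₁₃ : ¬ sameHOrbit H L₁ L₃)
    (hd₂₃ : ¬ sameHOrbit H L₂ L₃)
    (hrep : ∀ L : Submodule ℂ (Fin 2 → ℂ), Module.finrank ℂ L = 1 →
      ({1, -1} : Set (Matrix.SpecialLinearGroup (Fin 2) ℂ)) ⊂ lineStabSetSL H L →
      sameHOrbit H L L₁ ∨ sameHOrbit H L L₂ ∨ sameHOrbit H L L₃) :
    (lineStabSetSL H L₁).ncard + (lineStabSetSL H L₂).ncard
        + (lineStabSetSL H L₃).ncard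
      = 2 * (Nat.card (ConjClasses ↥H) + 1) := by
  classical
  have hfinK : Finite ↥H := hHfin.to_subtype
  letI : Fintype ↥H := Fintype.ofFinite ↥H
  set N : ℕ := Nat.card ↥H with hN
  have hNpos : 0 < N := Nat.card_pos
  have hord : ∀ g ∈ H, g ^ N = 1 := by
    intro g hg
    have h1 : (⟨g, hg⟩ : ↥H) ^ N = 1 := pow_card_eq_one'
    have h2 := congrArg (fun x : ↥H => (x : G2)) h1
    simpa using h2
  set m : Submodule ℂ (Fin 2 → ℂ) → ℕ := fun L => (lineStabSetSL H L).ncard with hm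
  set w : G2 → ℕ := fun x => ({g : G2 | g ∈ H ∧ g * x = x * g}).ncard with hwdef
  -- generic facts about an orbit
  have horb : ∀ L₀ : Submodule ℂ (Fin 2 → ℂ), Module.finrank ℂ L₀ = 1 →
      (MulAction.orbit ↥H L₀).Finite ∧
      (∀ L' ∈ MulAction.orbit ↥H L₀, m L' = m L₀ ∧ ∃ v ≠ 0, L' = Submodule.span ℂ {v}) ∧
      (MulAction.orbit ↥H L₀).ncard * m L₀ = N := by
    intro L₀ hL₀
    obtain ⟨v₀, hv₀, hsp₀⟩ := line_span hL₀
    have hfin : (MulAction.orbit ↥H L₀).Finite := Set.finite_range _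
    refine ⟨hfin, ?_, ?_⟩
    · rintro L' ⟨k, rfl⟩
      constructor
      · exact stab_card_conj H k.2 L₀
      · refine ⟨((k : G2) : Matrix (Fin 2) (Fin 2) ℂ).mulVec v₀, mulVec_ne_zero _ hv₀, ?_⟩
        show lineImageSL (k : G2) L₀ = _
        rw [hsp₀, lineImage_span]
    · letI : Fintype (MulAction.orbit ↥H L₀) := hfin.fintype
      have hos := MulAction.card_orbit_mul_card_stabilizer_eq_card_group ↥H L₀
      have h1 : (MulAction.orbit ↥H L₀).ncard = Fintype.card (MulAction.orbit ↥H L₀) := by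
        rw [← Nat.card_coe_set_eq, Nat.card_eq_fintype_card]
      have h2 : m L₀ = Fintype.card (MulAction.stabilizer ↥H L₀) := by
        show (lineStabSetSL H L₀).ncard = _
        rw [card_stabSet_eq H L₀, ← Nat.card_eq_fintype_card]
        exact Nat.card_congr
          { toFun := fun x => ⟨x.1, x.2⟩
            invFun := fun x => ⟨x.1, x.2⟩
            left_inv := fun _ => rfl
            right_inv := fun _ => rfl }
      rw [h1, h2, hos, hN, Nat.card_eq_fintype_card]
  obtain ⟨hfin1, hprop1, hos1⟩ := horb L₁ hL₁
  obtain ⟨hfin2, hprop2, hos2⟩ := horb L₂ hL₂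
  obtain ⟨hfin3, hprop3, hos3⟩ := horb L₃ hL₃
  set F1 : Finset (Submodule ℂ (Fin 2 → ℂ)) := hfin1.toFinset with hF1
  set F2 : Finset (Submodule ℂ (Fin 2 → ℂ)) := hfin2.toFinset with hF2
  set F3 : Finset (Submodule ℂ (Fin 2 → ℂ)) := hfin3.toFinset with hF3
  have hdisj12 : Disjoint F1 F2 := by
    rw [Finset.disjoint_left]
    intro L h1 h2
    exact hd₁₂ (sameHOrbit_of_mem_orbits H (hfin1.mem_toFinset.mp h1) (hfin2.mem_toFinset.mp h2))
  have hdisj13 : Disjoint F1 F3 := by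
    rw [Finset.disjoint_left]
    intro L h1 h2
    exact hd₁₃ (sameHOrbit_of_mem_orbits H (hfin1.mem_toFinset.mp h1) (hfin3.mem_toFinset.mp h2))
  have hdisj23 : Disjoint F2 F3 := by
    rw [Finset.disjoint_left]
    intro L h1 h2
    exact hd₂₃ (sameHOrbit_of_mem_orbits H (hfin2.mem_toFinset.mp h1) (hfin3.mem_toFinset.mp h2))
  set X : Finset (Submodule ℂ (Fin 2 → ℂ)) := F1 ∪ F2 ∪ F3 with hX
  have hXspan : ∀ L ∈ X, ∃ v ≠ 0, L = Submodule.span ℂ {v} := by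
    intro L hL
    rcases Finset.mem_union.mp hL with hL' | hL'
    · rcases Finset.mem_union.mp hL' with hL'' | hL''
      · exact (hprop1 L (hfin1.mem_toFinset.mp hL'')).2
      · exact (hprop2 L (hfin2.mem_toFinset.mp hL'')).2
    · exact (hprop3 L (hfin3.mem_toFinset.mp hL')).2
  -- sums of `m` and `m * m` over each orbit finset
  have horb2 : ∀ (L₀ : Submodule ℂ (Fin 2 → ℂ)) (hfin : (MulAction.orbit ↥H L₀).Finite),
      (∀ L' ∈ MulAction.orbit ↥H L₀, m L' = m L₀) →
      (MulAction.orbit ↥H L₀).ncard * m L₀ = N →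
      (∑ L ∈ hfin.toFinset, m L = N) ∧ (∑ L ∈ hfin.toFinset, m L * m L = N * m L₀) := by
    intro L₀ hfin hconst hos
    have hcard : hfin.toFinset.card = (MulAction.orbit ↥H L₀).ncard :=
      (Set.ncard_eq_toFinset_card _ hfin).symm
    have e1 : ∑ L ∈ hfin.toFinset, m L = hfin.toFinset.card * m L₀ := by
      rw [Finset.sum_congr rfl (fun L hL => hconst L (hfin.mem_toFinset.mp hL)),
        Finset.sum_const, smul_eq_mul]
    have e2 : ∑ L ∈ hfin.toFinset, m L * m L = hfin.toFinset.card * (m L₀ * m L₀) := by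
      rw [Finset.sum_congr rfl (fun L hL => by rw [hconst L (hfin.mem_toFinset.mp hL)]),
        Finset.sum_const, smul_eq_mul]
    exact ⟨by rw [e1, hcard, hos], by rw [e2, hcard, ← mul_assoc, hos]⟩
  obtain ⟨hsum1, hsq1⟩ := horb2 L₁ hfin1 (fun L' hL' => (hprop1 L' hL').1) hos1
  obtain ⟨hsum2, hsq2⟩ := horb2 L₂ hfin2 (fun L' hL' => (hprop2 L' hL').1) hos2
  obtain ⟨hsum3, hsq3⟩ := horb2 L₃ hfin3 (fun L' hL' => (hprop3 L' hL').1) hos3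
  have hdisj123 : Disjoint (F1 ∪ F2) F3 := Finset.disjoint_union_left.mpr ⟨hdisj13, hdisj23⟩
  have hMtot : ∑ L ∈ X, m L = 3 * N := by
    rw [hX, Finset.sum_union hdisj123, Finset.sum_union hdisj12, hsum1, hsum2, hsum3]
    ring
  have hMtot2 : ∑ L ∈ X, m L * m L = N * m L₁ + N * m L₂ + N * m L₃ := by
    rw [hX, Finset.sum_union hdisj123, Finset.sum_union hdisj12, hsq1, hsq2, hsq3]
  -- any invariant line of a noncentral element of H lies in X
  have hmemX : ∀ R : Submodule ℂ (Fin 2 → ℂ), (∃ v ≠ 0, R = Submodule.span ℂ {v}) →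
      (∃ x ∈ H, x ∉ ({1, -1} : Set G2) ∧ lineImageSL x R = R) → R ∈ X := by
    rintro R ⟨v, hv, rfl⟩ ⟨x, hxH, hxn, hxinv⟩
    have hrk : Module.finrank ℂ (Submodule.span ℂ {v}) = 1 := finrank_span_singleton hv
    have hsub : ({1, -1} : Set G2) ⊆ lineStabSetSL H (Submodule.span ℂ {v}) := by
      intro y hy
      rcases hy with rfl | hy
      · exact ⟨H.one_mem, lineImage_one _⟩
      · rw [Set.mem_singleton_iff] at hy
        subst hy
        exact ⟨hnegI, lineImage_neg_one _⟩
    have hstrict : ({1, -1} : Set G2) ⊂ lineStabSetSL H (Submodule.span ℂ {v}) :=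
      hsub.ssubset_of_ne (fun heq => hxn (by rw [heq]; exact ⟨hxH, hxinv⟩))
    rcases hrep _ hrk hstrict with hso | hso | hso
    · rcases hso with ⟨g, hg, him⟩
      exact Finset.mem_union.mpr (Or.inl (Finset.mem_union.mpr
        (Or.inl (hfin1.mem_toFinset.mpr (mem_orbit_of_image H hg him)))))
    · rcases hso with ⟨g, hg, him⟩
      exact Finset.mem_union.mpr (Or.inl (Finset.mem_union.mpr
        (Or.inr (hfin2.mem_toFinset.mpr (mem_orbit_of_image H hg him)))))
    · rcases hso with ⟨g, hg, him⟩
      exact Finset.mem_union.mpr (Or.inr (hfin3.mem_toFinset.mpr (mem_orbit_of_image H hg him)))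
  -- row sums: noncentral elements
  have hrowN : ∀ h : ↥H, ((h : G2)) ≠ 1 → ((h : G2)) ≠ -1 →
      (∑ L ∈ X, if lineImageSL (h : G2) L = L then m L else 0) = 2 * w (h : G2) := by
    intro h h1 hm1
    obtain ⟨P, Q, hPQ, hPsp, hQsp, hinvP, hinvQ, hclassL, hstP, hstQ⟩ :=
      key_noncentral H hNpos hord h.2 h1 hm1
    have hnotc : (h : G2) ∉ ({1, -1} : Set G2) := by
      intro hc
      rcases hc with hc | hc
      · exact h1 hc
      · rw [Set.mem_singleton_iff] at hc
        exact hm1 hc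
    have hPX : P ∈ X := hmemX P hPsp ⟨(h : G2), h.2, hnotc, hinvP⟩
    have hQX : Q ∈ X := hmemX Q hQsp ⟨(h : G2), h.2, hnotc, hinvQ⟩
    have hfilter : X.filter (fun L => lineImageSL (h : G2) L = L) = {P, Q} := by
      apply Finset.ext
      intro L
      simp only [Finset.mem_filter, Finset.mem_insert, Finset.mem_singleton]
      constructor
      · rintro ⟨hLX, hLinv⟩
        exact hclassL L (hXspan L hLX) hLinv
      · rintro (rfl | rfl)
        exacts [⟨hPX, hinvP⟩, ⟨hQX, hinvQ⟩]
    rw [← Finset.sum_filter, hfilter, Finset.sum_pair hPQ]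
    have hmp : m P = w (h : G2) := by
      show (lineStabSetSL H P).ncard = _
      rw [hstP]
    have hmq : m Q = w (h : G2) := by
      show (lineStabSetSL H Q).ncard = _
      rw [hstQ]
    rw [hmp, hmq, two_mul]
  -- w on central elements
  have hwc : ∀ x : G2, (x = 1 ∨ x = -1) → w x = N := by
    intro x hc
    have hset : {g : G2 | g ∈ H ∧ g * x = x * g} = (H : Set G2) := by
      ext g
      simp only [Set.mem_setOf_eq, SetLike.mem_coe]
      constructor
      · exact And.left
      · intro hg
        refine ⟨hg, ?_⟩
        rcases hc with rfl | rfl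
        · rw [mul_one, one_mul]
        · rw [mul_neg, neg_mul, mul_one, one_mul]
    show ({g : G2 | g ∈ H ∧ g * x = x * g}).ncard = N
    rw [hset, ← Nat.card_coe_set_eq, hN]
    exact Nat.card_congr (Equiv.subtypeEquivRight (fun x => Iff.rfl))
  -- row sums: central elements
  have hrowC : ∀ h : ↥H, ((h : G2) = 1 ∨ (h : G2) = -1) →
      (∑ L ∈ X, if lineImageSL (h : G2) L = L then m L else 0) = 3 * N := by
    intro h hc
    have hallinv : ∀ L ∈ X, lineImageSL (h : G2) L = L := by
      intro L _
      rcases hc with hc | hc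
      · rw [hc]; exact lineImage_one L
      · rw [hc]; exact lineImage_neg_one L
    rw [Finset.sum_congr rfl (fun L hL => if_pos (hallinv L hL)), hMtot]
  -- total sum, row-wise
  have hcentset : Finset.univ.filter (fun h : ↥H => (h : G2) = 1 ∨ (h : G2) = -1)
      = {(1 : ↥H), ⟨-1, hnegI⟩} := by
    ext h
    simp only [Finset.mem_filter, Finset.mem_univ, true_and, Finset.mem_insert,
      Finset.mem_singleton]
    constructor
    · rintro (hc | hc)
      · exact Or.inl (Subtype.ext hc)
      · exact Or.inr (Subtype.ext hc)
    · rintro (rfl | rfl)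
      · exact Or.inl rfl
      · exact Or.inr rfl
  have hcentcard : (Finset.univ.filter (fun h : ↥H => (h : G2) = 1 ∨ (h : G2) = -1)).card = 2 := by
    rw [hcentset]
    rw [Finset.card_insert_of_notMem, Finset.card_singleton]
    intro hmem
    rw [Finset.mem_singleton] at hmem
    exact neg_one_ne_one (congrArg Subtype.val hmem).symm
  have hStot : (∑ h : ↥H, ∑ L ∈ X, if lineImageSL (h : G2) L = L then m L else 0)
      = 2 * (∑ h : ↥H, w (h : G2)) + 2 * N := by
    have hper : ∀ h : ↥H, (∑ L ∈ X, if lineImageSL (h : G2) L = L then m L else 0)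
        = 2 * w (h : G2) + (if (h : G2) = 1 ∨ (h : G2) = -1 then N else 0) := by
      intro h
      by_cases hc : (h : G2) = 1 ∨ (h : G2) = -1
      · rw [hrowC h hc, if_pos hc, hwc (h : G2) hc]
        ring
      · rw [hrowN h (fun he => hc (Or.inl he)) (fun he => hc (Or.inr he)), if_neg hc, add_zero]
    rw [Finset.sum_congr rfl (fun h _ => hper h), Finset.sum_add_distrib, Finset.mul_sum]
    congr 1
    rw [← Finset.sum_filter, Finset.sum_const, smul_eq_mul, hcentcard]
  -- Burnside's lemma
  have hburn : (∑ h : ↥H, w (h : G2)) = Nat.card (ConjClasses ↥H) * N := by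
    have h1 : ∀ h : ↥H, w (h : G2) = Fintype.card {g : ↥H // Commute h g} := by
      intro h
      show ({g : G2 | g ∈ H ∧ g * (h : G2) = (h : G2) * g}).ncard = _
      rw [← Nat.card_coe_set_eq, ← Nat.card_eq_fintype_card]
      exact Nat.card_congr
        { toFun := fun x => ⟨⟨x.1, x.2.1⟩, Subtype.ext x.2.2.symm⟩
          invFun := fun g => ⟨(g.1 : G2), g.1.2, (congrArg Subtype.val g.2).symm⟩
          left_inv := fun _ => rfl
          right_inv := fun _ => rfl }
    rw [Finset.sum_congr rfl (fun h _ => h1 h)]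
    have h2 : ∑ h : ↥H, Fintype.card {g : ↥H // Commute h g}
        = Fintype.card {p : ↥H × ↥H // Commute p.1 p.2} := by
      rw [Fintype.card_congr (Equiv.subtypeProdEquivSigmaSubtype (fun a b : ↥H => Commute a b)),
        Fintype.card_sigma]
    rw [h2, ← Nat.card_eq_fintype_card, card_comm_eq_card_conjClasses_mul_card, hN]
  -- total sum, column-wise
  have hScol : (∑ h : ↥H, ∑ L ∈ X, if lineImageSL (h : G2) L = L then m L else 0)
      = N * m L₁ + N * m L₂ + N * m L₃ := by
    rw [Finset.sum_comm]
    have hcol : ∀ L ∈ X, (∑ h : ↥H, if lineImageSL (h : G2) L = L then m L else 0)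
        = m L * m L := by
      intro L _
      rw [← Finset.sum_filter, Finset.sum_const, smul_eq_mul]
      congr 1
      rw [← Fintype.card_subtype, ← Nat.card_eq_fintype_card]
      exact (card_stabSet_eq H L).symm
    rw [Finset.sum_congr rfl hcol, hMtot2]
  -- assemble
  have heq : N * (m L₁ + m L₂ + m L₃) = N * (2 * (Nat.card (ConjClasses ↥H) + 1)) := by
    calc N * (m L₁ + m L₂ + m L₃) = N * m L₁ + N * m L₂ + N * m L₃ := by ring
    _ = 2 * (∑ h : ↥H, w (h : G2)) + 2 * N := by rw [← hScol, hStot]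
    _ = 2 * (Nat.card (ConjClasses ↥H) * N) + 2 * N := by rw [hburn]
    _ = N * (2 * (Nat.card (ConjClasses ↥H) + 1)) := by ring
  exact Nat.eq_of_mul_eq_mul_left hNpos heq
end

section
/- Let G be a finite subgroup of GL(2, ℂ) that is small, i.e., no element g ∈ G with g ≠ I fixes a nonzero vector of ℂ². If G is non-abelian, then −I ∈ G. -/
open Matrix

namespace Small11

attribute [local instance] Classical.propDecidable

noncomputable section

abbrev V2 : Type := Fin 2 → ℂ
abbrev M2 : Type := Matrix (Fin 2) (Fin 2) ℂ
abbrev GL2 : Type := GL (Fin 2) ℂ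

/-- Two vectors are (linearly) independent. -/
def Ind (u w : V2) : Prop := ∀ s t : ℂ, s • u + t • w = 0 → s = 0 ∧ t = 0

/-- A matrix in `GL2` is scalar. -/
def scal (g : GL2) : Prop := ∃ e : ℂ, (g : M2) = e • (1 : M2)

/-- Smallness of a subgroup. -/
def Small (G : Subgroup GL2) : Prop :=
  ∀ g ∈ G, g ≠ 1 → ∀ v : V2, v ≠ 0 → (g : M2) *ᵥ v ≠ v

/-- All elements have odd order. -/
def OddG (G : Subgroup GL2) : Prop := ∀ g ∈ G, ∃ n : ℕ, Odd n ∧ g ^ n = 1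

lemma ext2 {A B : M2} (h : ∀ v : V2, A *ᵥ v = B *ᵥ v) : A = B := by
  ext i j
  have := congrFun (h (Pi.single j 1)) i
  simpa [mulVec_single] using this

lemma v2ext {f g : V2} (h0 : f 0 = g 0) (h1 : f 1 = g 1) : f = g := by
  funext i
  match i with
  | ⟨0, _⟩ => exact h0
  | ⟨1, _⟩ => exact h1

lemma ind_u_ne {u w : V2} (h : Ind u w) : u ≠ 0 := by
  intro hu
  rcases h 1 0 (by simp [hu]) with ⟨h1, _⟩
  exact one_ne_zero h1

lemma ind_w_ne {u w : V2} (h : Ind u w) : w ≠ 0 := by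
  intro hw
  rcases h 0 1 (by simp [hw]) with ⟨_, h1⟩
  exact one_ne_zero h1

lemma ind_symm {u w : V2} (h : Ind u w) : Ind w u := by
  intro s t hst
  have := h t s (by rw [add_comm]; exact hst)
  exact ⟨this.2, this.1⟩

lemma exists_comp {u : V2} (hu : u ≠ 0) : ∃ w : V2, Ind u w := by
  have h01 : u 0 ≠ 0 ∨ u 1 ≠ 0 := by
    by_contra h
    push_neg at h
    apply hu
    funext i
    fin_cases i
    · exact h.1
    · exact h.2
  rcases h01 with h | h
  · refine ⟨![0, 1], fun s t hst => ?_⟩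
    have h0 := congrFun hst 0
    have h1 := congrFun hst 1
    simp [Pi.add_apply, Pi.smul_apply, smul_eq_mul] at h0 h1
    have hs : s = 0 := by
      rcases h0 with h0 | h0
      · exact h0
      · exact absurd h0 h
    exact ⟨hs, by rwa [hs, zero_mul, zero_add] at h1⟩
  · refine ⟨![1, 0], fun s t hst => ?_⟩
    have h0 := congrFun hst 0
    have h1 := congrFun hst 1
    simp [Pi.add_apply, Pi.smul_apply, smul_eq_mul] at h0 h1
    have hs : s = 0 := by
      rcases h1 with h1 | h1
      · exact h1
      · exact absurd h1 h
    exact ⟨hs, by rwa [hs, zero_mul, zero_add] at h0⟩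

lemma ind_det {u w : V2} (h : Ind u w) : u 0 * w 1 - u 1 * w 0 ≠ 0 := by
  intro hd
  have e1 : (w 1) • u + (-(u 1)) • w = 0 := by
    apply v2ext
    · simp only [Pi.add_apply, Pi.smul_apply, smul_eq_mul, Pi.zero_apply, neg_mul]
      linear_combination hd
    · simp only [Pi.add_apply, Pi.smul_apply, smul_eq_mul, Pi.zero_apply, neg_mul]
      ring
  have e2 : (w 0) • u + (-(u 0)) • w = 0 := by
    apply v2ext
    · simp only [Pi.add_apply, Pi.smul_apply, smul_eq_mul, Pi.zero_apply, neg_mul]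
      ring
    · simp only [Pi.add_apply, Pi.smul_apply, smul_eq_mul, Pi.zero_apply, neg_mul]
      linear_combination -hd
  obtain ⟨hw1, hu1⟩ := h _ _ e1
  obtain ⟨hw0, hu0⟩ := h _ _ e2
  apply ind_u_ne h
  apply v2ext
  · simpa using neg_eq_zero.mp hu0
  · simpa using neg_eq_zero.mp hu1

lemma span2 {u w : V2} (h : Ind u w) (v : V2) : ∃ s t : ℂ, v = s • u + t • w := by
  have hd : u 0 * w 1 - u 1 * w 0 ≠ 0 := ind_det h
  refine ⟨(v 0 * w 1 - v 1 * w 0) / (u 0 * w 1 - u 1 * w 0),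
          (u 0 * v 1 - u 1 * v 0) / (u 0 * w 1 - u 1 * w 0), ?_⟩
  apply v2ext <;>
  · simp only [Pi.add_apply, Pi.smul_apply, smul_eq_mul]
    rw [div_mul_eq_mul_div, div_mul_eq_mul_div, ← add_div, eq_div_iff hd]
    ring

lemma ext_on {A B : M2} {u w : V2} (h : Ind u w) (h1 : A *ᵥ u = B *ᵥ u)
    (h2 : A *ᵥ w = B *ᵥ w) : A = B := by
  apply ext2
  intro v
  obtain ⟨s, t, rfl⟩ := span2 h v
  rw [mulVec_add, mulVec_add, mulVec_smul, mulVec_smul, mulVec_smul, mulVec_smul, h1, h2]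

lemma gcancel (y : GL2) (v : V2) : (y : M2) *ᵥ (((y⁻¹ : GL2) : M2) *ᵥ v) = v := by
  rw [mulVec_mulVec, ← Units.val_mul, mul_inv_cancel, Units.val_one, one_mulVec]

lemma gmul_ne {g : GL2} {v : V2} (hv : v ≠ 0) : (g : M2) *ᵥ v ≠ 0 := by
  intro h0
  apply hv
  have h1 : ((g⁻¹ : GL2) : M2) *ᵥ ((g : M2) *ᵥ v) = v := by
    rw [mulVec_mulVec, ← Units.val_mul, inv_mul_cancel, Units.val_one, one_mulVec]
  rw [h0, mulVec_zero] at h1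
  exact h1.symm

lemma eig_ne {g : GL2} {v : V2} {c : ℂ} (hv : v ≠ 0) (h : (g : M2) *ᵥ v = c • v) :
    c ≠ 0 := by
  intro hc
  apply gmul_ne hv (g := g)
  rw [h, hc, zero_smul]

lemma free {G : Subgroup GL2} (hsm : Small G) {g h : GL2} (hg : g ∈ G) (hh : h ∈ G)
    {v : V2} (hv : v ≠ 0) (heq : (g : M2) *ᵥ v = (h : M2) *ᵥ v) : g = h := by
  by_contra hne
  refine hsm (h⁻¹ * g) (mul_mem (inv_mem hh) hg) (fun he => hne ?_) v hv ?_
  · exact (inv_mul_eq_one.mp he).symm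
  · rw [Units.val_mul, ← mulVec_mulVec, heq, mulVec_mulVec, ← Units.val_mul,
      inv_mul_cancel, Units.val_one, one_mulVec]

lemma exists_eig (A : M2) : ∃ (c : ℂ) (v : V2), v ≠ 0 ∧ A *ᵥ v = c • v := by
  obtain ⟨c, hc⟩ := Module.End.exists_eigenvalue (Matrix.mulVecLin A)
  obtain ⟨v, hv⟩ := hc.exists_hasEigenvector
  refine ⟨c, v, hv.2, ?_⟩
  have := hv.apply_eq_smul
  simpa [Matrix.mulVecLin_apply] using this

lemma scal_e_ne {g : GL2} {e : ℂ} (he : (g : M2) = e • (1 : M2)) : e ≠ 0 := by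
  intro h0
  have h1 : ((g⁻¹ : GL2) : M2) * (g : M2) = 1 := by
    rw [← Units.val_mul, inv_mul_cancel, Units.val_one]
  rw [he, h0, zero_smul, mul_zero] at h1
  have := congrFun (congrFun h1 0) 0
  simp [Matrix.one_apply] at this

lemma scal_comm {h : GL2} (hs : scal h) (k : GL2) : h * k = k * h := by
  obtain ⟨e, he⟩ := hs
  apply Units.ext
  rw [Units.val_mul, Units.val_mul, he, smul_mul_assoc, one_mul, mul_smul_comm, mul_one]

lemma scal_mul {p q : GL2} (hp : scal p) (hq : scal q) : scal (p * q) := by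
  obtain ⟨e, he⟩ := hp
  obtain ⟨f, hf⟩ := hq
  exact ⟨e * f, by rw [Units.val_mul, he, hf, smul_mul_assoc, one_mul, smul_smul]⟩

lemma scal_inv {h : GL2} (hs : scal h) : scal h⁻¹ := by
  obtain ⟨e, he⟩ := hs
  have he0 : e ≠ 0 := scal_e_ne he
  refine ⟨e⁻¹, ?_⟩
  have h1 : ((h⁻¹ : GL2) : M2) * (h : M2) = 1 := by
    rw [← Units.val_mul, inv_mul_cancel, Units.val_one]
  rw [he, mul_smul_comm, mul_one] at h1
  rw [← h1, smul_smul, inv_mul_cancel₀ he0, one_smul]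

lemma scal_conj {x g : GL2} : scal (x⁻¹ * g * x) ↔ scal g := by
  constructor
  · rintro ⟨e, he⟩
    refine ⟨e, ?_⟩
    have hg : g = x * (x⁻¹ * g * x) * x⁻¹ := by group
    calc (g : M2) = ((x * (x⁻¹ * g * x) * x⁻¹ : GL2) : M2) := by rw [← hg]
      _ = (x : M2) * ((x⁻¹ * g * x : GL2) : M2) * ((x⁻¹ : GL2) : M2) := by
          rw [Units.val_mul, Units.val_mul]
      _ = (x : M2) * (e • 1) * ((x⁻¹ : GL2) : M2) := by rw [he]
      _ = e • ((x : M2) * ((x⁻¹ : GL2) : M2)) := by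
          rw [mul_smul_comm, smul_mul_assoc, mul_one]
      _ = e • (1 : M2) := by rw [← Units.val_mul, mul_inv_cancel, Units.val_one]
  · rintro ⟨e, he⟩
    refine ⟨e, ?_⟩
    calc ((x⁻¹ * g * x : GL2) : M2) = ((x⁻¹ : GL2) : M2) * (g : M2) * (x : M2) := by
          rw [Units.val_mul, Units.val_mul]
      _ = ((x⁻¹ : GL2) : M2) * (e • 1) * (x : M2) := by rw [he]
      _ = e • (((x⁻¹ : GL2) : M2) * (x : M2)) := by
          rw [mul_smul_comm, smul_mul_assoc, mul_one]
      _ = e • (1 : M2) := by rw [← Units.val_mul, inv_mul_cancel, Units.val_one]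

lemma conj_comm {p q x : GL2} (h : p * q = q * p) :
    (x * p * x⁻¹) * (x * q * x⁻¹) = (x * q * x⁻¹) * (x * p * x⁻¹) := by
  have h1 : x * p * x⁻¹ * (x * q * x⁻¹) = x * (p * q) * x⁻¹ := by group
  have h2 : x * q * x⁻¹ * (x * p * x⁻¹) = x * (q * p) * x⁻¹ := by group
  rw [h1, h2, h]

lemma conj_eig {g x : GL2} {c : ℂ} {u : V2} (h : (g : M2) *ᵥ u = c • u) :
    ((x⁻¹ * g * x : GL2) : M2) *ᵥ (((x⁻¹ : GL2) : M2) *ᵥ u)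
      = c • (((x⁻¹ : GL2) : M2) *ᵥ u) := by
  rw [mulVec_mulVec, ← Units.val_mul]
  have h1 : x⁻¹ * g * x * x⁻¹ = x⁻¹ * g := by group
  rw [h1, Units.val_mul, ← mulVec_mulVec, h, mulVec_smul]

/-- Existence of eigendata with two distinct eigenvalues for a nonscalar
finite-order element. -/
lemma eigendata {g : GL2} (hord : ∃ n : ℕ, 0 < n ∧ (g : M2) ^ n = 1) (hns : ¬ scal g) :
    ∃ (c d : ℂ) (u w : V2), Ind u w ∧ c ≠ d ∧
      (g : M2) *ᵥ u = c • u ∧ (g : M2) *ᵥ w = d • w := by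
  obtain ⟨c, u, hu, hcu⟩ := exists_eig (g : M2)
  have hc0 : c ≠ 0 := eig_ne hu hcu
  obtain ⟨w0, hind⟩ := exists_comp hu
  obtain ⟨x, d, hw0⟩ := span2 hind ((g : M2) *ᵥ w0)
  by_cases hcd : d = c
  · exfalso
    subst hcd
    obtain ⟨n, hn, hgn⟩ := hord
    set N : M2 := (g : M2) - d • 1 with hN
    have hNu : N *ᵥ u = 0 := by
      rw [hN, sub_mulVec, hcu, smul_mulVec, one_mulVec, sub_self]
    have hNw0 : N *ᵥ w0 = x • u := by
      rw [hN, sub_mulVec, hw0, smul_mulVec, one_mulVec, add_sub_cancel_right]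
    set M : M2 := d⁻¹ • N with hM
    have hMu : M *ᵥ u = 0 := by rw [hM, smul_mulVec, hNu, smul_zero]
    have hMw0 : M *ᵥ w0 = (d⁻¹ * x) • u := by
      rw [hM, smul_mulVec, hNw0, smul_smul]
    have hMM : M * M = 0 := by
      apply ext_on hind
      · rw [← mulVec_mulVec, hMu, mulVec_zero, zero_mulVec]
      · rw [← mulVec_mulVec, hMw0, mulVec_smul, hMu, smul_zero, zero_mulVec]
    have hgM : (g : M2) = d • (1 + M) := by
      rw [smul_add, hM, smul_smul, mul_inv_cancel₀ hc0, one_smul, hN]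
      abel
    have hUk : ∀ k : ℕ, (1 + M) ^ k = 1 + (k : ℂ) • M := by
      intro k
      induction k with
      | zero => simp
      | succ k ih =>
        rw [pow_succ, ih]
        have expand : (1 + (k : ℂ) • M) * (1 + M)
            = 1 + M + (k : ℂ) • M + (k : ℂ) • (M * M) := by
          rw [add_mul, one_mul, mul_add, mul_one, smul_mul_assoc]
          abel
        rw [expand, hMM, smul_zero, add_zero]
        push_cast
        rw [add_smul, one_smul]
        abel
    have h1 : (1 : M2) = d ^ n • (1 + (n : ℂ) • M) := by
      rw [← hUk, ← smul_pow, ← hgM, hgn]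
    have hdn : d ^ n * (n : ℂ) ≠ 0 :=
      mul_ne_zero (pow_ne_zero _ hc0) (Nat.cast_ne_zero.mpr hn.ne')
    have hMscal : M = ((d ^ n * (n : ℂ))⁻¹ * (1 - d ^ n)) • (1 : M2) := by
      rw [smul_add, smul_smul] at h1
      have h2 : (d ^ n * (n : ℂ)) • M = (1 - d ^ n) • (1 : M2) := by
        calc (d ^ n * (n : ℂ)) • M
            = (d ^ n • (1 : M2) + (d ^ n * (n : ℂ)) • M) - d ^ n • (1 : M2) := by abel
          _ = (1 : M2) - d ^ n • (1 : M2) := by rw [← h1]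
          _ = (1 - d ^ n) • (1 : M2) := by rw [sub_smul, one_smul]
      rw [← smul_smul, ← h2, smul_smul, inv_mul_cancel₀ hdn, one_smul]
    apply hns
    refine ⟨d * (1 + (d ^ n * (n : ℂ))⁻¹ * (1 - d ^ n)), ?_⟩
    have hone : (1 : M2) + ((d ^ n * (n : ℂ))⁻¹ * (1 - d ^ n)) • (1 : M2)
        = (1 + (d ^ n * (n : ℂ))⁻¹ * (1 - d ^ n)) • (1 : M2) := by
      rw [add_smul, one_smul]
    rw [hgM, hMscal, hone, smul_smul]
  · refine ⟨c, d, u, x • u + (d - c) • w0, ?_, fun h => hcd (h.symm), hcu, ?_⟩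
    · intro s t hst
      have h2 : (s + t * x) • u + (t * (d - c)) • w0
          = s • u + t • (x • u + (d - c) • w0) := by module
      obtain ⟨h3, h4⟩ := hind _ _ (h2.trans hst)
      have ht : t = 0 := by
        rcases mul_eq_zero.mp h4 with h | h
        · exact h
        · exact absurd (sub_eq_zero.mp h) hcd
      refine ⟨?_, ht⟩
      rw [ht, zero_mul, add_zero] at h3
      exact h3
    · rw [mulVec_add, mulVec_smul, mulVec_smul, hcu, hw0]
      module

lemma oddsq {g : GL2} {n : ℕ} (hn : Odd n) (hg : g ^ n = 1) {e : ℂ}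
    (hsq : ((g ^ 2 : GL2) : M2) = e • (1 : M2)) : scal g := by
  obtain ⟨m, rfl⟩ := hn
  have h1 : g = (g ^ 2) ^ (m + 1) := by
    rw [← pow_mul]
    have h2 : 2 * (m + 1) = (2 * m + 1) + 1 := by ring
    rw [h2, pow_succ, hg, one_mul]
  refine ⟨e ^ (m + 1), ?_⟩
  calc (g : M2) = (((g ^ 2) ^ (m + 1) : GL2) : M2) := by rw [← h1]
    _ = ((g ^ 2 : GL2) : M2) ^ (m + 1) := Units.val_pow_eq_pow_val _ _
    _ = (e • (1 : M2)) ^ (m + 1) := by rw [hsq]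
    _ = e ^ (m + 1) • (1 : M2) := by rw [smul_pow, one_pow]

lemma noswap {g : GL2} {n : ℕ} (hn : Odd n) (hg : g ^ n = 1) {u w : V2}
    (hind : Ind u w) {s t : ℂ} (hgu : (g : M2) *ᵥ u = s • w)
    (hgw : (g : M2) *ᵥ w = t • u) : False := by
  have hg2 : ((g ^ 2 : GL2) : M2) = (g : M2) * (g : M2) := by
    rw [Units.val_pow_eq_pow_val, pow_two]
  have hsq : ((g ^ 2 : GL2) : M2) = (s * t) • (1 : M2) := by
    apply ext_on hind
    · rw [hg2, ← mulVec_mulVec, hgu, mulVec_smul, hgw, smul_smul, smul_mulVec,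
        one_mulVec]
    · rw [hg2, ← mulVec_mulVec, hgw, mulVec_smul, hgu, smul_smul, smul_mulVec,
        one_mulVec, mul_comm]
  obtain ⟨e, he⟩ := oddsq hn hg hsq
  have h1 : e • u = s • w := by
    rw [← hgu, he, smul_mulVec, one_mulVec]
  have h0 : e • u + (-s) • w = 0 := by
    rw [neg_smul, ← h1, add_neg_cancel]
  obtain ⟨-, hs⟩ := hind _ _ h0
  have hs0 : s = 0 := neg_eq_zero.mp hs
  apply gmul_ne (ind_u_ne hind) (g := g)
  rw [hgu, hs0, zero_smul]

lemma eig_unique {g : GL2} {c d : ℂ} {u w : V2} (hind : Ind u w) (hcd : c ≠ d)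
    (hu : (g : M2) *ᵥ u = c • u) (hw : (g : M2) *ᵥ w = d • w)
    {e : ℂ} {v : V2} (hv : v ≠ 0) (hev : (g : M2) *ᵥ v = e • v) :
    (e = c ∧ ∃ t : ℂ, t ≠ 0 ∧ v = t • u) ∨ (e = d ∧ ∃ t : ℂ, t ≠ 0 ∧ v = t • w) := by
  obtain ⟨s, t, rfl⟩ := span2 hind v
  have hL : (g : M2) *ᵥ (s • u + t • w) = (s * c) • u + (t * d) • w := by
    rw [mulVec_add, mulVec_smul, mulVec_smul, hu, hw]
    module
  rw [hL] at hev
  have h1 : (s * c - e * s) • u + (t * d - e * t) • w = 0 := by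
    have h2 : (s * c - e * s) • u + (t * d - e * t) • w
        = ((s * c) • u + (t * d) • w) - e • (s • u + t • w) := by module
    rw [h2, hev, sub_self]
  obtain ⟨h2, h3⟩ := hind _ _ h1
  by_cases hs : s = 0
  · have ht : t ≠ 0 := by
      intro h
      apply hv
      rw [hs, h, zero_smul, zero_smul, add_zero]
    right
    have hed : e = d := by
      have h4 : t * (d - e) = 0 := by linear_combination h3
      rcases mul_eq_zero.mp h4 with h | h
      · exact absurd h ht
      · exact (sub_eq_zero.mp h).symm
    exact ⟨hed, t, ht, by rw [hs, zero_smul, zero_add]⟩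
  · have hec : e = c := by
      have h4 : s * (c - e) = 0 := by linear_combination h2
      rcases mul_eq_zero.mp h4 with h | h
      · exact absurd h hs
      · have := sub_eq_zero.mp h
        exact this.symm
    have ht : t = 0 := by
      by_contra ht
      have h4 : t * (d - e) = 0 := by linear_combination h3
      rcases mul_eq_zero.mp h4 with h | h
      · exact absurd h ht
      · exact absurd (hec.symm.trans (sub_eq_zero.mp h).symm) hcd
    left
    exact ⟨hec, s, hs, by rw [ht, zero_smul, add_zero]⟩

lemma comm_shared {G : Subgroup GL2} (hsm : Small G) {g h : GL2} (hg : g ∈ G)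
    (hh : h ∈ G) {v : V2} (hv : v ≠ 0) {s t : ℂ} (h1 : (g : M2) *ᵥ v = s • v)
    (h2 : (h : M2) *ᵥ v = t • v) : g * h = h * g := by
  apply free hsm (mul_mem hg hh) (mul_mem hh hg) hv
  rw [Units.val_mul, Units.val_mul, ← mulVec_mulVec, ← mulVec_mulVec, h1, h2,
    mulVec_smul, mulVec_smul, h1, h2, smul_smul, smul_smul, mul_comm]

/-- Characterization of the centralizer of an element with given eigendata. -/
lemma cent_iff {G : Subgroup GL2} (hsm : Small G) {a : GL2} (ha : a ∈ G)
    {c d : ℂ} {u w : V2} (hind : Ind u w) (hcd : c ≠ d)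
    (hau : (a : M2) *ᵥ u = c • u) (haw : (a : M2) *ᵥ w = d • w)
    {h : GL2} (hh : h ∈ G) :
    h * a = a * h ↔ ∃ s : ℂ, (h : M2) *ᵥ u = s • u := by
  constructor
  · intro hc0
    have h1 : (a : M2) *ᵥ ((h : M2) *ᵥ u) = c • ((h : M2) *ᵥ u) := by
      rw [mulVec_mulVec, ← Units.val_mul, ← hc0, Units.val_mul, ← mulVec_mulVec, hau,
        mulVec_smul]
    have hhu : (h : M2) *ᵥ u ≠ 0 := gmul_ne (ind_u_ne hind)
    rcases eig_unique hind hcd hau haw hhu h1 with ⟨_, t, _, htu⟩ | ⟨hcd', _⟩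
    · exact ⟨t, htu⟩
    · exact absurd hcd' hcd
  · rintro ⟨s, hs⟩
    exact comm_shared hsm hh ha (ind_u_ne hind) hs hau

/-- A nonscalar element of a centralizer has the same eigendata basis. -/
lemma cent_eigendata {G : Subgroup GL2} (hsm : Small G) {a : GL2} (ha : a ∈ G)
    {c d : ℂ} {u w : V2} (hind : Ind u w) (hcd : c ≠ d)
    (hau : (a : M2) *ᵥ u = c • u) (haw : (a : M2) *ᵥ w = d • w)
    {h : GL2} (hh : h ∈ G) (hns : ¬ scal h) (hcomm : h * a = a * h) :
    ∃ s t : ℂ, s ≠ t ∧ (h : M2) *ᵥ u = s • u ∧ (h : M2) *ᵥ w = t • w := by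
  obtain ⟨s, hs⟩ := (cent_iff hsm ha hind hcd hau haw hh).mp hcomm
  obtain ⟨t, ht⟩ := (cent_iff hsm ha (ind_symm hind) (Ne.symm hcd) haw hau hh).mp hcomm
  refine ⟨s, t, ?_, hs, ht⟩
  intro hst
  apply hns
  refine ⟨s, ext_on hind ?_ ?_⟩
  · rw [hs, smul_mulVec, one_mulVec]
  · rw [ht, smul_mulVec, one_mulVec, hst]

lemma hord_of {G : Subgroup GL2} (hodd : OddG G) {g : GL2} (hg : g ∈ G) :
    ∃ n : ℕ, 0 < n ∧ (g : M2) ^ n = 1 := by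
  obtain ⟨n, hn, hgn⟩ := hodd g hg
  refine ⟨n, hn.pos, ?_⟩
  rw [← Units.val_pow_eq_pow_val, hgn, Units.val_one]

/-- Two commuting nonscalar elements have the same centralizer. -/
lemma cent_trans {G : Subgroup GL2} (hsm : Small G) (hodd : OddG G)
    {g k : GL2} (hg : g ∈ G) (hk : k ∈ G) (hnsg : ¬ scal g) (hnsk : ¬ scal k)
    (hcomm : k * g = g * k) {x : GL2} (hx : x ∈ G) :
    x * g = g * x ↔ x * k = k * x := by
  obtain ⟨c, d, u, w, hind, hcd, hgu, hgw⟩ := eigendata (hord_of hodd hg) hnsg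
  obtain ⟨s, t, hst, hku, hkw⟩ := cent_eigendata hsm hg hind hcd hgu hgw hk hnsk hcomm
  rw [cent_iff hsm hg hind hcd hgu hgw hx, cent_iff hsm hk hind hst hku hkw hx]

end

end Small11

section MainCount

open Small11 Finset

attribute [local instance] Classical.propDecidable

/-- The key double-counting identity. -/
lemma Small11.count_key (G : Subgroup GL2) (hGfin : (G : Set GL2).Finite)
    (hsm : Small G) (hodd : OddG G) {a0 : GL2} (ha0 : a0 ∈ G) (hns : ¬ scal a0) :
    hGfin.toFinset.card *
      ((hGfin.toFinset.filter fun h => h * a0 = a0 * h).filter fun h => ¬ scal h).card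
    = (hGfin.toFinset.filter fun h => h * a0 = a0 * h).card *
      ((hGfin.toFinset.filter fun g => ¬ scal g).filter fun g =>
        ∃ x ∈ G, (x⁻¹ * g * x) * a0 = a0 * (x⁻¹ * g * x)).card := by
  classical
  set Γ := hGfin.toFinset with hΓdef
  have hΓ : ∀ g : GL2, g ∈ Γ ↔ g ∈ G := fun g => Set.Finite.mem_toFinset hGfin
  obtain ⟨c, d, u, w, hind, hcd, hau, haw⟩ := eigendata (hord_of hodd ha0) hns
  set Df : Finset GL2 := Γ.filter fun h => h * a0 = a0 * h with hDf
  set Dns : Finset GL2 := Df.filter fun h => ¬ scal h with hDns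
  set T : Finset GL2 := Γ.filter fun g => ¬ scal g with hT
  set cov : Finset GL2 := T.filter fun g =>
    ∃ x ∈ G, (x⁻¹ * g * x) * a0 = a0 * (x⁻¹ * g * x) with hcov
  -- Step A : for each x ∈ Γ, the set of nonscalar g with x⁻¹gx ∈ Df has card Dns.card
  have stepA : ∀ x ∈ Γ, (Γ.filter fun g => ¬ scal g ∧
      (x⁻¹ * g * x) * a0 = a0 * (x⁻¹ * g * x)).card = Dns.card := by
    intro x hxΓ
    have hxG : x ∈ G := (hΓ x).mp hxΓ
    apply Finset.card_bij' (fun g _ => x⁻¹ * g * x) (fun h _ => x * h * x⁻¹)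
    · intro g hg
      rw [Finset.mem_filter] at hg
      obtain ⟨hgΓ, hgns, hgc⟩ := hg
      rw [hDns, Finset.mem_filter, hDf, Finset.mem_filter]
      refine ⟨⟨(hΓ _).mpr (mul_mem (mul_mem (inv_mem hxG) ((hΓ g).mp hgΓ)) hxG), hgc⟩, ?_⟩
      intro hsc
      exact hgns (scal_conj.mp hsc)
    · intro h hh
      rw [hDns, Finset.mem_filter, hDf, Finset.mem_filter] at hh
      obtain ⟨⟨hhΓ, hhc⟩, hhns⟩ := hh
      rw [Finset.mem_filter]
      have hmem : x * h * x⁻¹ ∈ G := mul_mem (mul_mem hxG ((hΓ h).mp hhΓ)) (inv_mem hxG)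
      refine ⟨(hΓ _).mpr hmem, ?_, ?_⟩
      · intro hsc
        apply hhns
        have : x⁻¹ * (x * h * x⁻¹) * x = h := by group
        rw [← this]
        exact scal_conj.mpr hsc
      · have : x⁻¹ * (x * h * x⁻¹) * x = h := by group
        rw [this]
        exact hhc
    · intro g _; group
    · intro h _; group
  -- Step B/C : double counting
  have stepBC : Γ.card * Dns.card = ∑ g ∈ T, (Γ.filter fun x =>
      (x⁻¹ * g * x) * a0 = a0 * (x⁻¹ * g * x)).card := by
    have hB : ∑ x ∈ Γ, (Γ.filter fun g => ¬ scal g ∧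
        (x⁻¹ * g * x) * a0 = a0 * (x⁻¹ * g * x)).card = Γ.card * Dns.card := by
      rw [Finset.sum_congr rfl stepA, Finset.sum_const, smul_eq_mul]
    rw [← hB]
    simp only [Finset.card_filter]
    rw [Finset.sum_comm]
    rw [hT, Finset.sum_filter]
    apply Finset.sum_congr rfl
    intro g _
    by_cases hs : scal g
    · simp [hs]
    · simp [hs]
  -- Step D : fibers
  have stepD : ∀ g ∈ T, (Γ.filter fun x =>
      (x⁻¹ * g * x) * a0 = a0 * (x⁻¹ * g * x)).card
      = if (∃ x ∈ G, (x⁻¹ * g * x) * a0 = a0 * (x⁻¹ * g * x)) then Df.card else 0 := by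
    intro g hgT
    rw [hT, Finset.mem_filter] at hgT
    obtain ⟨hgΓ, hgns⟩ := hgT
    have hgG : g ∈ G := (hΓ g).mp hgΓ
    by_cases hcovg : ∃ x ∈ G, (x⁻¹ * g * x) * a0 = a0 * (x⁻¹ * g * x)
    · rw [if_pos hcovg]
      obtain ⟨x0, hx0G, hx0c⟩ := hcovg
      have himg : Γ.filter (fun x => (x⁻¹ * g * x) * a0 = a0 * (x⁻¹ * g * x))
          = Df.image (fun y => x0 * y) := by
        ext x
        rw [Finset.mem_filter, Finset.mem_image]
        constructor
        · rintro ⟨hxΓ, hxc⟩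
          have hxG : x ∈ G := (hΓ x).mp hxΓ
          refine ⟨x0⁻¹ * x, ?_, by group⟩
          rw [hDf, Finset.mem_filter]
          have hyG : x0⁻¹ * x ∈ G := mul_mem (inv_mem hx0G) hxG
          refine ⟨(hΓ _).mpr hyG, ?_⟩
          -- the hard part: y := x0⁻¹x commutes with a0
          set y := x0⁻¹ * x with hy
          set g1 := x0⁻¹ * g * x0 with hg1
          set g2 := x⁻¹ * g * x with hg2
          have hg1G : g1 ∈ G := mul_mem (mul_mem (inv_mem hx0G) hgG) hx0G
          have hg2G : g2 ∈ G := mul_mem (mul_mem (inv_mem hxG) hgG) hxG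
          have hg1ns : ¬ scal g1 := fun hsc => hgns (scal_conj.mp hsc)
          have hg2ns : ¬ scal g2 := fun hsc => hgns (scal_conj.mp hsc)
          have hg21 : g2 = y⁻¹ * g1 * y := by rw [hy, hg1, hg2]; group
          obtain ⟨s1, t1, hst1, hg1u, hg1w⟩ :=
            cent_eigendata hsm ha0 hind hcd hau haw hg1G hg1ns hx0c
          obtain ⟨s2, t2, hst2, hg2u, hg2w⟩ :=
            cent_eigendata hsm ha0 hind hcd hau haw hg2G hg2ns hxc
          set p : V2 := ((y⁻¹ : GL2) : M2) *ᵥ u with hp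
          set q : V2 := ((y⁻¹ : GL2) : M2) *ᵥ w with hq
          have hpne : p ≠ 0 := gmul_ne (ind_u_ne hind)
          have hqne : q ≠ 0 := gmul_ne (ind_w_ne hind)
          have hgp : (g2 : M2) *ᵥ p = s1 • p := by
            rw [hg21, hp]
            exact conj_eig hg1u
          have hgq : (g2 : M2) *ᵥ q = t1 • q := by
            rw [hg21, hq]
            exact conj_eig hg1w
          have hyinvG : y⁻¹ ∈ G := inv_mem hyG
          rcases eig_unique hind hst2 hg2u hg2w hpne hgp with ⟨_, α, hα, hpu⟩ | ⟨_, α, hα, hpw⟩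
          · -- p = α • u : y⁻¹ preserves the line of u, so y commutes with a0
            have hyinv : y⁻¹ * a0 = a0 * y⁻¹ :=
              (cent_iff hsm ha0 hind hcd hau haw hyinvG).mpr ⟨α, hpu⟩
            have h5 := congrArg (fun z => y * z * y) hyinv
            have h6 : a0 * y = y * a0 := by simpa [mul_assoc] using h5
            exact h6.symm
          · rcases eig_unique hind hst2 hg2u hg2w hqne hgq with ⟨_, β, hβ, hqu⟩ | ⟨_, β, hβ, hqw⟩
            · -- swap case : contradiction with odd order
              exfalso
              obtain ⟨n, hn, hyn⟩ := hodd y⁻¹ hyinvG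
              exact noswap hn hyn hind (by rw [← hp, hpw]) (by rw [← hq, hqu])
            · -- degenerate case : y⁻¹ maps both lines into the line of w
              exfalso
              have h5 : ((y⁻¹ : GL2) : M2) *ᵥ (β • u) = ((y⁻¹ : GL2) : M2) *ᵥ (α • w) := by
                rw [mulVec_smul, mulVec_smul, ← hp, ← hq, hpw, hqw, smul_smul, smul_smul,
                  mul_comm]
              have h6 : β • u = α • w := by
                have h7 := congrArg (fun v => (y : M2) *ᵥ v) h5
                simp only [gcancel] at h7
                exact h7
              have h8 : β • u + (-α) • w = 0 := by
                rw [neg_smul, ← h6, add_neg_cancel]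
              obtain ⟨hβ0, -⟩ := hind _ _ h8
              exact hβ hβ0
        · rintro ⟨y, hyDf, rfl⟩
          rw [hDf, Finset.mem_filter] at hyDf
          obtain ⟨hyΓ, hyc⟩ := hyDf
          have hyG : y ∈ G := (hΓ y).mp hyΓ
          constructor
          · exact (hΓ _).mpr (mul_mem hx0G hyG)
          · have hg1G : x0⁻¹ * g * x0 ∈ G := mul_mem (mul_mem (inv_mem hx0G) hgG) hx0G
            have hg1ns : ¬ scal (x0⁻¹ * g * x0) := fun hsc => hgns (scal_conj.mp hsc)
            -- y commutes with x0⁻¹gx0 since both are in the centralizer of a0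
            obtain ⟨s1, hs1⟩ := (cent_iff hsm ha0 hind hcd hau haw hg1G).mp hx0c
            obtain ⟨s2, hs2⟩ := (cent_iff hsm ha0 hind hcd hau haw hyG).mp hyc
            have hcy : (x0⁻¹ * g * x0) * y = y * (x0⁻¹ * g * x0) :=
              comm_shared hsm hg1G hyG (ind_u_ne hind) hs1 hs2
            have hrw : (x0 * y)⁻¹ * g * (x0 * y) = y⁻¹ * (x0⁻¹ * g * x0) * y := by group
            rw [hrw]
            have hyy : y⁻¹ * (x0⁻¹ * g * x0) * y = x0⁻¹ * g * x0 := by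
              rw [mul_assoc, hcy, ← mul_assoc, inv_mul_cancel, one_mul]
            rw [hyy]
            exact hx0c
      rw [himg, Finset.card_image_of_injective _ (mul_right_injective x0)]
    · rw [if_neg hcovg]
      rw [Finset.card_eq_zero, Finset.filter_eq_empty_iff]
      intro x hxΓ hxc
      exact hcovg ⟨x, (hΓ x).mp hxΓ, hxc⟩
  -- Step E : conclude
  have stepE : ∑ g ∈ T, (Γ.filter fun x =>
      (x⁻¹ * g * x) * a0 = a0 * (x⁻¹ * g * x)).card = Df.card * cov.card := by
    rw [Finset.sum_congr rfl stepD]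
    rw [hcov, ← Finset.sum_filter]
    rw [Finset.sum_const, smul_eq_mul, mul_comm]
  rw [stepBC, stepE]

end MainCount

open Small11 Finset in
/-- A finite small subgroup `G ⊂ GL(2, ℂ)` (no non-identity
element fixes a nonzero vector of `ℂ²`) which is non-abelian contains `-I`. -/
theorem small_nonabelian_contains_neg_one
    (G : Subgroup (GL (Fin 2) ℂ)) (hGfin : (G : Set (GL (Fin 2) ℂ)).Finite)
    (hsmall : ∀ g ∈ G, g ≠ 1 → ∀ v : Fin 2 → ℂ, v ≠ 0 →
      Matrix.mulVecLin (g : Matrix (Fin 2) (Fin 2) ℂ) v ≠ v)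
    (hnab : ¬ ∀ a ∈ G, ∀ b ∈ G, a * b = b * a) :
    (-1 : GL (Fin 2) ℂ) ∈ G := by
  classical
  by_contra hneg
  have hsm : Small11.Small G := by
    intro g hg hg1 v hv hfix
    apply hsmall g hg hg1 v hv
    rw [Matrix.mulVecLin_apply]
    exact hfix
  have hfinG : Finite ↥G := hGfin.to_subtype
  have hfty : Fintype ↥G := Fintype.ofFinite ↥G
  -- no element of order two (otherwise it would be -1 ∈ G)
  have hno2 : ∀ g ∈ G, g ^ 2 = 1 → g = 1 := by
    intro g hg hg2
    by_contra hg1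
    have hM2 : (g : M2) * (g : M2) = 1 := by
      rw [← pow_two, ← Units.val_pow_eq_pow_val, hg2, Units.val_one]
    have hgne : (g : M2) ≠ -1 := by
      intro h
      apply hneg
      have hgeq : g = -1 := Units.ext (by rw [h, Units.val_neg, Units.val_one])
      rwa [← hgeq]
    have h1 : (g : M2) + 1 ≠ 0 := by
      intro h
      exact hgne (eq_neg_of_add_eq_zero_left h)
    obtain ⟨v, hv⟩ : ∃ v : V2, ((g : M2) + 1) *ᵥ v ≠ 0 := by
      by_contra h
      push_neg at h
      apply h1
      apply ext2
      intro v
      rw [h v, zero_mulVec]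
    set v' : V2 := ((g : M2) + 1) *ᵥ v with hv'
    have hfix : (g : M2) *ᵥ v' = v' := by
      rw [hv', add_mulVec, one_mulVec, mulVec_add, mulVec_mulVec, hM2, one_mulVec,
        add_comm]
    exact hsm g hg hg1 v' hv hfix
  -- the order of the group is odd
  have hcard_odd : ¬ 2 ∣ Fintype.card ↥G := by
    intro h2
    have hp : Fact (Nat.Prime 2) := ⟨Nat.prime_two⟩
    obtain ⟨x, hx⟩ := exists_prime_orderOf_dvd_card 2 h2
    have hx2 : x ^ 2 = 1 := by
      have h3 := pow_orderOf_eq_one x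
      rwa [hx] at h3
    have hx1 : x ≠ 1 := by
      intro h
      rw [h, orderOf_one] at hx
      norm_num at hx
    have : (x : GL (Fin 2) ℂ) = 1 := hno2 x x.2 (by
      have := congrArg (Subtype.val) hx2
      push_cast at this
      exact this)
    exact hx1 (Subtype.ext this)
  have hodd : OddG G := by
    intro g hg
    set x : ↥G := ⟨g, hg⟩ with hx
    refine ⟨orderOf x, ?_, ?_⟩
    · rw [← Nat.not_even_iff_odd, even_iff_two_dvd]
      intro h2
      exact hcard_odd (h2.trans (orderOf_dvd_card))
    · have := pow_orderOf_eq_one x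
      have h3 := congrArg (Subtype.val) this
      push_cast at h3
      exact h3
  -- non-commuting pair
  push_neg at hnab
  obtain ⟨a, ha, b, hb, hab⟩ := hnab
  have hans : ¬ scal a := by
    intro hs
    exact hab (scal_comm hs b)
  -- counting setup
  set Γ : Finset (GL (Fin 2) ℂ) := hGfin.toFinset with hΓdef
  have hΓ : ∀ g : GL2, g ∈ Γ ↔ g ∈ G := fun g => Set.Finite.mem_toFinset hGfin
  set Zf : Finset GL2 := Γ.filter scal with hZf
  set T : Finset GL2 := Γ.filter (fun g => ¬ scal g) with hT
  have hzt : Zf.card + T.card = Γ.card :=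
    Finset.card_filter_add_card_filter_not scal
  have hz1 : 1 ≤ Zf.card := by
    rw [Nat.one_le_iff_ne_zero, ← Nat.pos_iff_ne_zero, Finset.card_pos]
    exact ⟨1, by
      rw [hZf, Finset.mem_filter]
      exact ⟨(hΓ 1).mpr (one_mem G), 1, by rw [Units.val_one, one_smul]⟩⟩
  -- Df and Dns for a nonscalar element
  have hDfacts : ∀ g0 ∈ G, ¬ scal g0 →
      (Γ.filter fun h => h * g0 = g0 * h).card
        = Zf.card + ((Γ.filter fun h => h * g0 = g0 * h).filter fun h => ¬ scal h).card
      ∧ Zf.card ≤ ((Γ.filter fun h => h * g0 = g0 * h).filter fun h => ¬ scal h).card := by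
    intro g0 hg0 hg0ns
    set Df : Finset GL2 := Γ.filter fun h => h * g0 = g0 * h with hDf
    have hsplit : (Df.filter scal).card + (Df.filter fun h => ¬ scal h).card = Df.card :=
      Finset.card_filter_add_card_filter_not scal
    have hZeq : Df.filter scal = Zf := by
      ext h
      rw [Finset.mem_filter, hDf, Finset.mem_filter, hZf, Finset.mem_filter]
      constructor
      · rintro ⟨⟨h1, _⟩, h3⟩
        exact ⟨h1, h3⟩
      · rintro ⟨h1, h2⟩
        exact ⟨⟨h1, scal_comm h2 g0⟩, h2⟩
    constructor
    · rw [← hsplit, hZeq]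
    · -- inject Zf into Df.filter (¬ scal) via multiplication by g0
      have hinj : ∀ s ∈ Zf, g0 * s ∈ Df.filter fun h => ¬ scal h := by
        intro s hs
        rw [hZf, Finset.mem_filter] at hs
        obtain ⟨hsΓ, hssc⟩ := hs
        rw [Finset.mem_filter, hDf, Finset.mem_filter]
        refine ⟨⟨(hΓ _).mpr (mul_mem hg0 ((hΓ s).mp hsΓ)), ?_⟩, ?_⟩
        · rw [mul_assoc, scal_comm hssc g0, ← mul_assoc]
        · intro hsc
          apply hg0ns
          have : g0 = (g0 * s) * s⁻¹ := by group
          rw [this]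
          exact scal_mul hsc (scal_inv hssc)
      calc Zf.card = (Zf.image (fun s => g0 * s)).card :=
            (Finset.card_image_of_injective _ (mul_right_injective g0)).symm
        _ ≤ (Df.filter fun h => ¬ scal h).card := by
            apply Finset.card_le_card
            intro x hx
            rw [Finset.mem_image] at hx
            obtain ⟨s, hs, rfl⟩ := hx
            exact hinj s hs
  -- covered sets
  set covA : Finset GL2 := T.filter (fun g =>
    ∃ x ∈ G, (x⁻¹ * g * x) * a = a * (x⁻¹ * g * x)) with hcovA
  by_cases hall : T ⊆ covA
  · -- all nonscalars covered : G is abelian, contradiction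
    have hcovAT : covA = T := Finset.Subset.antisymm (Finset.filter_subset _ _) hall
    have hkey := count_key G hGfin hsm hodd ha hans
    rw [← hΓdef, ← hT, ← hcovA, hcovAT] at hkey
    obtain ⟨hc1, hc2⟩ := hDfacts a ha hans
    set Df : Finset GL2 := Γ.filter fun h => h * a = a * h with hDf
    set dns := (Df.filter fun h => ¬ scal h).card with hdns
    rw [hc1, ← hzt] at hkey
    -- hkey : (Zf.card + T.card) * dns = (Zf.card + dns) * T.card
    have heq3 : Zf.card * dns = Zf.card * T.card := by
      have e : Zf.card * dns + T.card * dns = Zf.card * T.card + dns * T.card := by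
        calc Zf.card * dns + T.card * dns = (Zf.card + T.card) * dns := by ring
          _ = (Zf.card + dns) * T.card := hkey
          _ = Zf.card * T.card + dns * T.card := by ring
      have e2 : T.card * dns = dns * T.card := by ring
      omega
    have hdT : dns = T.card := Nat.eq_of_mul_eq_mul_left (by omega) heq3
    have hcn : Df.card = Γ.card := by omega
    have hDfΓ : Df = Γ :=
      Finset.eq_of_subset_of_card_le (Finset.filter_subset _ _) (le_of_eq hcn.symm)
    have hbDf : b ∈ Df := by
      rw [hDfΓ]
      exact (hΓ b).mpr hb
    rw [hDf, Finset.mem_filter] at hbDf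
    exact hab hbDf.2.symm
  · -- some nonscalar h0 is not covered
    obtain ⟨h0, hh0T, hh0nc⟩ : ∃ h0 ∈ T, h0 ∉ covA := by
      by_contra h
      push_neg at h
      exact hall h
    have hh0G : h0 ∈ G := by
      rw [hT, Finset.mem_filter] at hh0T
      exact (hΓ h0).mp hh0T.1
    have hh0ns : ¬ scal h0 := by
      rw [hT, Finset.mem_filter] at hh0T
      exact hh0T.2
    set covH : Finset GL2 := T.filter (fun g =>
      ∃ x ∈ G, (x⁻¹ * g * x) * h0 = h0 * (x⁻¹ * g * x)) with hcovH
    -- h0 is in covH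
    have hh0covH : h0 ∈ covH := by
      rw [hcovH, Finset.mem_filter]
      refine ⟨hh0T, 1, one_mem G, ?_⟩
      have : (1 : GL2)⁻¹ * h0 * 1 = h0 := by group
      rw [this]
    -- disjointness of covA and covH
    have hdisj : Disjoint covA covH := by
      rw [Finset.disjoint_left]
      intro g hgA hgH
      apply hh0nc
      rw [hcovA, Finset.mem_filter] at hgA
      rw [hcovH, Finset.mem_filter] at hgH
      obtain ⟨hgT, x, hxG, hxc⟩ := hgA
      obtain ⟨-, y, hyG, hyc⟩ := hgH
      have hgns : ¬ scal g := by
        rw [hT, Finset.mem_filter] at hgT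
        exact hgT.2
      have hgG : g ∈ G := by
        rw [hT, Finset.mem_filter] at hgT
        exact (hΓ g).mp hgT.1
      -- k := y * h0 * y⁻¹ commutes with g
      have hk : g * (y * h0 * y⁻¹) = (y * h0 * y⁻¹) * g := by
        have h5 := conj_comm (x := y) hyc
        have e1 : y * (y⁻¹ * g * y) * y⁻¹ = g := by group
        rw [e1] at h5
        exact h5
      have hkG : y * h0 * y⁻¹ ∈ G := mul_mem (mul_mem hyG hh0G) (inv_mem hyG)
      have hkns : ¬ scal (y * h0 * y⁻¹) := by
        intro hsc
        apply hh0ns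
        have e2 : y⁻¹ * (y * h0 * y⁻¹) * y = h0 := by group
        rw [← e2]
        exact scal_conj.mpr hsc
      -- conjugate by x⁻¹ : x⁻¹gx commutes with x⁻¹ky... (x⁻¹ * k * x)
      have hk2 : (x⁻¹ * g * x) * (x⁻¹ * (y * h0 * y⁻¹) * x)
          = (x⁻¹ * (y * h0 * y⁻¹) * x) * (x⁻¹ * g * x) := by
        have h5 := conj_comm (x := x⁻¹) hk
        simpa [inv_inv] using h5
      have hg1G : x⁻¹ * g * x ∈ G := mul_mem (mul_mem (inv_mem hxG) hgG) hxG
      have hg1ns : ¬ scal (x⁻¹ * g * x) := fun hsc => hgns (scal_conj.mp hsc)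
      have hk1G : x⁻¹ * (y * h0 * y⁻¹) * x ∈ G :=
        mul_mem (mul_mem (inv_mem hxG) hkG) hxG
      have hk1ns : ¬ scal (x⁻¹ * (y * h0 * y⁻¹) * x) := fun hsc => hkns (scal_conj.mp hsc)
      -- same centralizer : a commutes with x⁻¹ k x
      have htrans := cent_trans hsm hodd hg1G hk1G hg1ns hk1ns hk2.symm ha
      have hac : a * (x⁻¹ * (y * h0 * y⁻¹) * x) = (x⁻¹ * (y * h0 * y⁻¹) * x) * a := by
        have h6 : a * (x⁻¹ * g * x) = (x⁻¹ * g * x) * a := hxc.symm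
        exact htrans.mp h6
      -- so h0 is covered for a via the element y⁻¹ * x
      rw [hcovA, Finset.mem_filter]
      refine ⟨hh0T, y⁻¹ * x, mul_mem (inv_mem hyG) hxG, ?_⟩
      have e3 : (y⁻¹ * x)⁻¹ * h0 * (y⁻¹ * x) = x⁻¹ * (y * h0 * y⁻¹) * x := by group
      rw [e3]
      exact hac.symm
    -- counting bounds
    have hboundA : Γ.card ≤ 2 * covA.card := by
      have hkey := count_key G hGfin hsm hodd ha hans
      rw [← hΓdef, ← hT, ← hcovA] at hkey
      obtain ⟨hc1, hc2⟩ := hDfacts a ha hans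
      set Df : Finset GL2 := Γ.filter fun h => h * a = a * h with hDf
      set dns := (Df.filter fun h => ¬ scal h).card with hdns
      have hDfpos : 0 < Df.card := by omega
      have h7 : Df.card * Γ.card ≤ Df.card * (2 * covA.card) := by
        calc Df.card * Γ.card = Γ.card * Zf.card + Γ.card * dns := by rw [hc1]; ring
          _ ≤ Γ.card * dns + Γ.card * dns := by
              have := Nat.mul_le_mul_left Γ.card hc2
              omega
          _ = 2 * (Γ.card * dns) := by ring
          _ = 2 * (Df.card * covA.card) := by rw [hkey]
          _ = Df.card * (2 * covA.card) := by ring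
      exact Nat.le_of_mul_le_mul_left h7 hDfpos
    have hboundH : Γ.card ≤ 2 * covH.card := by
      have hkey := count_key G hGfin hsm hodd hh0G hh0ns
      rw [← hΓdef, ← hT, ← hcovH] at hkey
      obtain ⟨hc1, hc2⟩ := hDfacts h0 hh0G hh0ns
      set Df : Finset GL2 := Γ.filter fun h => h * h0 = h0 * h with hDf
      set dns := (Df.filter fun h => ¬ scal h).card with hdns
      have hDfpos : 0 < Df.card := by omega
      have h7 : Df.card * Γ.card ≤ Df.card * (2 * covH.card) := by
        calc Df.card * Γ.card = Γ.card * Zf.card + Γ.card * dns := by rw [hc1]; ring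
          _ ≤ Γ.card * dns + Γ.card * dns := by
              have := Nat.mul_le_mul_left Γ.card hc2
              omega
          _ = 2 * (Γ.card * dns) := by ring
          _ = 2 * (Df.card * covH.card) := by rw [hkey]
          _ = Df.card * (2 * covH.card) := by ring
      exact Nat.le_of_mul_le_mul_left h7 hDfpos
    have hunion : covA.card + covH.card ≤ T.card := by
      rw [← Finset.card_union_of_disjoint hdisj]
      apply Finset.card_le_card
      intro x hx
      rcases Finset.mem_union.mp hx with h | h
      · exact Finset.filter_subset _ _ h
      · exact Finset.filter_subset _ _ h
    omega
end
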